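/- arXiv:1210.2101 — 8 statements merged into one kernel-verified Lean document; each statement's English description precedes it below -/
import Mathlib

section
/- Let G be a torsion-free group and K a normal subgroup of G such that the center of K is trivial and the quotient G/K is finite. Then the extension 1 → K → G → G/K → 1 is effective: for every g ∈ G, if there exists k₀ ∈ K with g·x·g⁻¹ = k₀·x·k₀⁻¹ for all x ∈ K, then g ∈ K. -/
/-- If `G` is torsion-free, `K ⊴ G` has trivial center and `G/K` is finite, then the
extension `1 → K → G → G/K → 1` is effective. -/
theorem effective_of_torsionFree_centerless_finiteQuotient (G : Type*) [Group G]
    (hG : ∀ g : G, g ≠ 1 → ¬IsOfFinOrder g) (K : Subgroup G) [K.Normal]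
    (hZ : ∀ k ∈ K, (∀ x ∈ K, k * x = x * k) → k = 1)
    (hfin : Finite (G ⧸ K)) (g : G)
    (h : ∃ k₀ ∈ K, ∀ x ∈ K, g * x * g⁻¹ = k₀ * x * k₀⁻¹) : g ∈ K := by
  obtain ⟨k₀, hk₀, hconj⟩ := h
  set c := k₀⁻¹ * g with hc
  have hcent : ∀ x ∈ K, c * x = x * c := by
    intro x hx
    have h1 : k₀⁻¹ * (g * x * g⁻¹) * g = k₀⁻¹ * (k₀ * x * k₀⁻¹) * g := by rw [hconj x hx]
    simp only [hc]
    group at h1 ⊢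
    simpa [mul_assoc] using h1
  -- the image of c in G/K has finite order
  have hq : IsOfFinOrder ((c : G) : G ⧸ K) := isOfFinOrder_of_finite _
  obtain ⟨n, hn, hcn⟩ := (isOfFinOrder_iff_pow_eq_one).1 hq
  have hcnK : c ^ n ∈ K := by
    rwa [← QuotientGroup.eq_one_iff, QuotientGroup.mk_pow]
  have hcent' : ∀ x ∈ K, c ^ n * x = x * c ^ n := by
    intro x hx
    have hcc : Commute c x := hcent x hx
    exact (hcc.pow_left n).eq
  have hcn1 : c ^ n = 1 := hZ _ hcnK hcent'
  have hc1 : c = 1 := by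
    by_contra hne
    exact hG c hne (isOfFinOrder_iff_pow_eq_one.2 ⟨n, hn, hcn1⟩)
  have : g = k₀ := by
    have := hc1
    rw [hc] at this
    group at this
    calc g = k₀ * (k₀⁻¹ * g) := by group
    _ = k₀ * 1 := by rw [← hc, hc1]
    _ = k₀ := mul_one _
  rwa [this]
end

section
/- Let 1 → A → G → Q → 1 be a central extension, i.e. A is a subgroup of the center of G (hence normal) and Q = G/A. If G is finitely generated and Q is finitely presented, then A is finitely generated. -/
/-- In a central extension `1 → A → G → Q → 1`, if `G` is finitely generated and
`Q = G/A` is finitely presented, then `A` is finitely generated. -/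
theorem centralSubgroup_fg_of_fg_of_quotient_fp (G : Type*) [Group G] (A : Subgroup G)
    [A.Normal] (hA : A ≤ Subgroup.center G) (hG : Group.FG G)
    (hQ : ∃ (n : ℕ) (π : FreeGroup (Fin n) →* G ⧸ A), Function.Surjective π ∧
      ∃ S : Finset (FreeGroup (Fin n)),
        π.ker = Subgroup.normalClosure (S : Set (FreeGroup (Fin n)))) :
    Group.FG A := by
  classical
  obtain ⟨n, π, hπs, S, hS⟩ := hQ
  -- lift the free group map to G
  have hlift : ∀ i : Fin n, ∃ g : G, (g : G ⧸ A) = π (FreeGroup.of i) := fun i =>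
    QuotientGroup.mk_surjective (π (FreeGroup.of i))
  choose σ hσ using hlift
  let φ : FreeGroup (Fin n) →* G := FreeGroup.lift σ
  have hcomm : (QuotientGroup.mk' A).comp φ = π := by
    apply FreeGroup.ext_hom
    intro i
    simp [φ, hσ i]
  have hcomm' : ∀ f : FreeGroup (Fin n), ((φ f : G) : G ⧸ A) = π f := by
    intro f
    have := congrArg (fun ψ => ψ f) hcomm
    simpa using this
  -- elements of S map into A, hence into the center
  have hSA : ∀ s ∈ (S : Set (FreeGroup (Fin n))), φ s ∈ A := by
    intro s hs
    have : s ∈ π.ker := by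
      rw [hS]; exact Subgroup.subset_normalClosure hs
    rw [← QuotientGroup.eq_one_iff (φ s), hcomm']
    exact this
  -- a section of π followed by φ
  choose β hβ using hπs
  let δ : G → G := fun g => (φ (β (g : G ⧸ A)))⁻¹ * g
  have hδA : ∀ g : G, δ g ∈ A := by
    intro g
    rw [← QuotientGroup.eq_one_iff]
    show ((((φ (β (g : G ⧸ A)))⁻¹ * g : G)) : G ⧸ A) = 1
    rw [QuotientGroup.mk_mul, QuotientGroup.mk_inv, hcomm', hβ]
    simp
  obtain ⟨T, hT⟩ := hG.1
  -- the candidate generating set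
  let M : Subgroup G := Subgroup.closure (φ '' (S : Set (FreeGroup (Fin n))) ∪ δ '' (T : Set G))
  have hMA : M ≤ A := by
    apply Subgroup.closure_le A |>.2
    rintro x (⟨s, hs, rfl⟩ | ⟨g, _, rfl⟩)
    · exact hSA s hs
    · exact hδA g
  have hMnormal : M.Normal := by
    constructor
    intro m hm g
    have hc := Subgroup.mem_center_iff.1 (hA (hMA hm)) g
    rw [hc]
    simpa using hm
  -- H := range of φ
  let H : Subgroup G := φ.range
  -- K := closure of φ '' S equals A ⊓ H
  have hKM : Subgroup.closure (φ '' (S : Set (FreeGroup (Fin n)))) ≤ M :=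
    Subgroup.closure_mono (Set.subset_union_left)
  have hmap : Subgroup.map φ (Subgroup.normalClosure (S : Set (FreeGroup (Fin n))))
      = Subgroup.closure (φ '' (S : Set (FreeGroup (Fin n)))) := by
    rw [Subgroup.normalClosure, MonoidHom.map_closure]
    apply le_antisymm
    · apply Subgroup.closure_le _ |>.2
      rintro x ⟨c, hc, rfl⟩
      obtain ⟨a, ha, hconj⟩ := Group.mem_conjugatesOfSet_iff.1 hc
      obtain ⟨u, hu⟩ := isConj_iff.1 hconj
      have : φ c = φ a := by
        rw [← hu]
        simp only [map_mul, map_inv]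
        rw [mul_assoc, ← Subgroup.mem_center_iff.1 (hA (hSA a ha)) (φ u)⁻¹]
        group
      rw [this]
      exact Subgroup.subset_closure ⟨a, ha, rfl⟩
    · exact Subgroup.closure_mono (Set.image_mono (f := φ) Group.subset_conjugatesOfSet)
  have hAH : A ⊓ H ≤ M := by
    rintro x ⟨hxA, f, rfl⟩
    have hfker : f ∈ π.ker := by
      rw [MonoidHom.mem_ker, ← hcomm']
      exact (QuotientGroup.eq_one_iff _).2 hxA
    rw [hS] at hfker
    have : φ f ∈ Subgroup.map φ (Subgroup.normalClosure (S : Set (FreeGroup (Fin n)))) :=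
      ⟨f, hfker, rfl⟩
    rw [hmap] at this
    exact hKM this
  -- H ⊔ M = ⊤
  have htop : H ⊔ M = ⊤ := by
    rw [eq_top_iff, ← hT, Subgroup.closure_le]
    intro g hg
    have hgdecomp : g = φ (β (g : G ⧸ A)) * δ g := by
      simp [δ]
    rw [hgdecomp]
    exact Subgroup.mul_mem _
      (Subgroup.mem_sup_left ⟨β (g : G ⧸ A), rfl⟩)
      (Subgroup.mem_sup_right (Subgroup.subset_closure (Or.inr ⟨g, hg, rfl⟩)))
  -- A ≤ M
  have hAM : A ≤ M := by
    intro a ha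
    have : a ∈ H ⊔ M := htop ▸ Subgroup.mem_top a
    have : a ∈ (↑(H ⊔ M) : Set G) := this
    rw [Subgroup.mul_normal] at this
    obtain ⟨h, hh, m, hm, rfl⟩ := this
    have hhA : h ∈ A := by
      have : (h * m) * m⁻¹ ∈ A := A.mul_mem ha (A.inv_mem (hMA hm))
      simpa using this
    exact M.mul_mem (hAH ⟨hhA, hh⟩) hm
  have hMeqA : M = A := le_antisymm hMA hAM
  rw [Group.fg_iff_subgroup_fg]
  refine ⟨(S.image φ) ∪ (T.image δ), ?_⟩
  rw [← hMeqA]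
  congr 1
  push_cast
  simp [Set.image_union]
end

section
/- (Selberg's Lemma) Let A be a finitely generated integral domain of characteristic zero, i.e. a commutative ring that is a domain, has characteristic zero, and is finitely generated as a ℤ-algebra. Then for every n, the group GL_n(A) of invertible n×n matrices over A has a torsion-free subgroup of finite index. -/
/-- The definition of `Monoid.IsTorsionFree` in Mathlib of December 2024 (since removed). -/
def Monoid.IsTorsionFree (G : Type*) [Monoid G] : Prop :=
  ∀ g : G, g ≠ 1 → ¬IsOfFinOrder g

/-- `ℤ` is a Jacobson ring. -/
lemma selberg_int_isJacobsonRing : IsJacobsonRing ℤ := by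
  rw [isJacobsonRing_iff_prime_eq]
  intro P hP
  by_cases hb : P = ⊥
  · subst hb
    refine le_antisymm (fun x hx => ?_) Ideal.le_jacobson
    rw [Ideal.mem_jacobson_bot] at hx
    rw [Ideal.mem_bot]
    have h1 := hx 1
    have h2 := hx 2
    rw [Int.isUnit_iff] at h1 h2
    omega
  · haveI : P.IsMaximal := IsPrime.to_maximal_ideal hb
    exact Ideal.jacobson_eq_self_of_isMaximal

/-- A field which is the quotient of a finitely generated `ℤ`-algebra by a maximal ideal
is finite. -/
lemma selberg_residue_finite {A : Type*} [CommRing A] (hfg : Algebra.FiniteType ℤ A)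
    (m : Ideal A) [m.IsMaximal] : Finite (A ⧸ m) := by
  letI : Field (A ⧸ m) := Ideal.Quotient.field m
  haveI := hfg
  haveI : IsJacobsonRing ℤ := selberg_int_isJacobsonRing
  haveI : IsJacobsonRing A := isJacobsonRing_of_finiteType (A := ℤ)
  haveI : Algebra.FiniteType ℤ (A ⧸ m) :=
    Algebra.FiniteType.of_surjective (Ideal.Quotient.mkₐ ℤ m)
      (Ideal.Quotient.mkₐ_surjective ℤ m)
  haveI : Module.Finite ℤ (A ⧸ m) := finite_of_finite_type_of_isJacobsonRing ℤ (A ⧸ m)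
  obtain ⟨p, hp⟩ := CharP.exists (A ⧸ m)
  have hp0 : p ≠ 0 := by
    rintro rfl
    haveI : CharZero (A ⧸ m) := CharP.charP_to_charZero _
    haveI : Algebra.IsIntegral ℤ (A ⧸ m) := Algebra.IsIntegral.of_finite ℤ _
    have h2 : IsIntegral ℤ ((algebraMap ℚ (A ⧸ m)) (1/2 : ℚ)) :=
      Algebra.IsIntegral.isIntegral _
    have h3 : IsIntegral ℤ (1/2 : ℚ) :=
      (isIntegral_algHom_iff ((algebraMap ℚ (A ⧸ m)).toIntAlgHom)
        (RingHom.injective _)).mp h2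
    obtain ⟨y, hy⟩ := IsIntegrallyClosed.isIntegral_iff.mp h3
    have h4 : (2 : ℚ) * (y : ℚ) = 1 := by
      have : ((y : ℤ) : ℚ) = 1/2 := hy
      rw [this]; norm_num
    have h5 : (2 * y : ℤ) = 1 := by exact_mod_cast h4
    omega
  exact Module.finite_of_fg_torsion _ fun x =>
    ⟨⟨(p : ℤ), mem_nonZeroDivisors_of_ne_zero (by exact_mod_cast hp0)⟩, by
      show ((p : ℤ)) • x = 0
      rw [natCast_zsmul, nsmul_eq_mul, CharP.cast_eq_zero (A ⧸ m) p, zero_mul]⟩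

/-- Key computation: a unit matrix congruent to `1` modulo a maximal ideal `m` of a
domain, whose order `r` is invertible in the residue field, must be `1`. -/
lemma selberg_key {A : Type*} [CommRing A] [IsDomain A] {n : ℕ}
    (m : Ideal A) [m.IsPrime] (r : ℕ)
    (hrm : ((r : ℕ) : A ⧸ m) ≠ 0)
    (y : (Matrix (Fin n) (Fin n) A)ˣ)
    (hker : ((y : Matrix (Fin n) (Fin n) A)).map (Ideal.Quotient.mk m) = 1)
    (hyr : y ^ r = 1) : y = 1 := by
  classical
  set N : Matrix (Fin n) (Fin n) A := (y : Matrix (Fin n) (Fin n) A) - 1 with hN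
  have hmapN : N.map (Ideal.Quotient.mk m) = 0 := by
    have : N = (y : Matrix (Fin n) (Fin n) A) - 1 := hN
    ext i j
    simp only [Matrix.map_apply, hN, Matrix.sub_apply, map_sub, Matrix.zero_apply]
    have := congrFun (congrFun hker i) j
    simp only [Matrix.map_apply] at this
    rw [this]
    by_cases h : i = j <;> simp [Matrix.one_apply, h]
  have hpow : (1 + N) ^ r = 1 := by
    have h1 : (1 : Matrix (Fin n) (Fin n) A) + N = (y : Matrix (Fin n) (Fin n) A) := by
      rw [hN]; abel
    rw [h1]
    have := congrArg (Units.val) hyr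
    simpa using this
  set B : Matrix (Fin n) (Fin n) A :=
    ∑ k ∈ Finset.range r, (N ^ k) * ((r.choose (k+1) : ℕ) : Matrix (Fin n) (Fin n) A)
    with hB
  have hNB : N * B = 0 := by
    have hcomm : Commute N (1 : Matrix (Fin n) (Fin n) A) := Commute.one_right N
    have hexp := hcomm.add_pow r
    simp only [one_pow, mul_one] at hexp
    rw [Finset.sum_range_succ'] at hexp
    simp only [pow_zero, Nat.choose_zero_right, Nat.cast_one, one_mul] at hexp
    have hsum : ∑ i ∈ Finset.range r,
        N ^ (i+1) * ((r.choose (i+1) : ℕ) : Matrix (Fin n) (Fin n) A) = N * B := by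
      rw [hB, Finset.mul_sum]
      refine Finset.sum_congr rfl fun i _ => ?_
      rw [pow_succ', mul_assoc]
    rw [hsum, add_comm N 1, hpow] at hexp
    have h5 : N * B + 1 = 0 + 1 := by rw [zero_add]; exact hexp.symm
    exact add_right_cancel h5
  have hmapB : B.map (Ideal.Quotient.mk m) =
      ((r : ℕ) : Matrix (Fin n) (Fin n) (A ⧸ m)) := by
    have hmaphom : B.map (Ideal.Quotient.mk m)
        = (RingHom.mapMatrix (Ideal.Quotient.mk m)) B := rfl
    rw [hmaphom, hB, map_sum]
    have : ∀ k ∈ Finset.range r,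
        (RingHom.mapMatrix (Ideal.Quotient.mk m))
            ((N ^ k) * ((r.choose (k+1) : ℕ) : Matrix (Fin n) (Fin n) A))
          = (0 : Matrix (Fin n) (Fin n) (A ⧸ m)) ^ k
            * ((r.choose (k+1) : ℕ) : Matrix (Fin n) (Fin n) (A ⧸ m)) := by
      intro k _
      rw [map_mul, map_pow, map_natCast, RingHom.mapMatrix_apply, hmapN]
    rw [Finset.sum_congr rfl this]
    rcases Nat.eq_zero_or_pos r with hr0 | hr0
    · exfalso; apply hrm; rw [hr0]; simp
    · obtain ⟨s, rfl⟩ : ∃ s, r = s + 1 := ⟨r - 1, (Nat.succ_pred_eq_of_pos hr0).symm⟩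
      rw [Finset.sum_range_succ']
      simp [Nat.choose_one_right, pow_succ]
  have hdet : (y : Matrix (Fin n) (Fin n) A) = 1 := by
    have hdetB : B.det ≠ 0 := by
      intro h0
      apply hrm
      have : (Ideal.Quotient.mk m) B.det = (B.map (Ideal.Quotient.mk m)).det :=
        RingHom.map_det (Ideal.Quotient.mk m) B
      rw [h0, map_zero] at this
      rw [hmapB] at this
      have hdiag : ((r : ℕ) : Matrix (Fin n) (Fin n) (A ⧸ m))
          = Matrix.diagonal (fun _ => ((r : ℕ) : A ⧸ m)) := by
        simp [Matrix.diagonal_natCast]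
      rw [hdiag, Matrix.det_diagonal, Finset.prod_const] at this
      have hpowne : ((r : ℕ) : A ⧸ m) ^ (Finset.univ.card (α := Fin n)) ≠ 0 ∨
          (Finset.univ.card (α := Fin n)) = 0 := by
        rcases Nat.eq_zero_or_pos (Finset.univ.card (α := Fin n)) with h | h
        · exact Or.inr h
        · exact Or.inl (pow_ne_zero _ hrm)
      rcases hpowne with h | h
      · exact absurd this.symm h
      · rw [h, pow_zero] at this
        exact absurd this.symm one_ne_zero
    have hsmul : B.det • N = 0 := by
      calc B.det • N = N * (B.det • 1) := by rw [Matrix.mul_smul, mul_one]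
        _ = N * (B * B.adjugate) := by rw [Matrix.mul_adjugate]
        _ = (N * B) * B.adjugate := by rw [mul_assoc]
        _ = 0 := by rw [hNB, Matrix.zero_mul]
    have hN0 : N = 0 := by
      ext i j
      have := congrFun (congrFun hsmul i) j
      simp only [Matrix.smul_apply, smul_eq_mul, Matrix.zero_apply] at this
      rcases mul_eq_zero.mp this with h | h
      · exact absurd h hdetB
      · simpa using h
    have h6 : (y : Matrix (Fin n) (Fin n) A) - 1 = 0 := hN0
    exact sub_eq_zero.mp h6
  exact Units.ext hdet

/-- Selberg's Lemma: if `A` is a finitely generated integral domain of characteristic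
zero, then `GL_n(A)` has a torsion-free subgroup of finite index. -/
theorem selberg_lemma (A : Type*) [CommRing A] [IsDomain A] [CharZero A]
    (hfg : Algebra.FiniteType ℤ A) (n : ℕ) :
    ∃ H : Subgroup (Matrix.GeneralLinearGroup (Fin n) A),
      H.FiniteIndex ∧ Monoid.IsTorsionFree H := by
  classical
  haveI := hfg
  haveI : IsJacobsonRing ℤ := selberg_int_isJacobsonRing
  haveI : IsJacobsonRing A := isJacobsonRing_of_finiteType (A := ℤ)
  obtain ⟨m1, hm1⟩ := Ideal.exists_maximal A
  haveI := hm1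
  haveI fin1 : Finite (A ⧸ m1) := selberg_residue_finite hfg m1
  obtain ⟨p1, hp1⟩ := CharP.exists (A ⧸ m1)
  have hp1p : p1.Prime := by
    letI : Field (A ⧸ m1) := Ideal.Quotient.field m1
    rcases CharP.char_is_prime_or_zero (A ⧸ m1) p1 with h | h
    · exact h
    · exact absurd h (CharP.char_ne_zero_of_finite (A ⧸ m1) p1)
  have hp1A : ((p1 : ℕ) : A) ≠ 0 := Nat.cast_ne_zero.mpr hp1p.ne_zero
  have hexists : ∃ m2 : Ideal A, m2.IsMaximal ∧ ((p1 : ℕ) : A) ∉ m2 := by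
    by_contra hc
    push_neg at hc
    have hmem : ((p1 : ℕ) : A) ∈ Ideal.jacobson ⊥ :=
      Ideal.mem_sInf.mpr fun {J} hJ => hc J hJ.2
    rw [IsJacobsonRing.out ‹IsJacobsonRing A› Ideal.isRadical_bot_of_noZeroDivisors] at hmem
    exact hp1A (Ideal.mem_bot.mp hmem)
  obtain ⟨m2, hm2, hp1m2⟩ := hexists
  haveI := hm2
  haveI fin2 : Finite (A ⧸ m2) := selberg_residue_finite hfg m2
  obtain ⟨p2, hp2⟩ := CharP.exists (A ⧸ m2)
  have hp2p : p2.Prime := by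
    letI : Field (A ⧸ m2) := Ideal.Quotient.field m2
    rcases CharP.char_is_prime_or_zero (A ⧸ m2) p2 with h | h
    · exact h
    · exact absurd h (CharP.char_ne_zero_of_finite (A ⧸ m2) p2)
  have hp1m2' : ((p1 : ℕ) : A ⧸ m2) ≠ 0 := by
    rw [← map_natCast (Ideal.Quotient.mk m2)]
    rw [Ne, Ideal.Quotient.eq_zero_iff_mem]
    exact hp1m2
  have hp12 : p1 ≠ p2 := by
    intro h
    exact hp1m2' (h ▸ CharP.cast_eq_zero (A ⧸ m2) p2)
  -- the congruence homomorphisms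
  let f1 : (Matrix (Fin n) (Fin n) A)ˣ →* (Matrix (Fin n) (Fin n) (A ⧸ m1))ˣ :=
    Units.map ((RingHom.mapMatrix (Ideal.Quotient.mk m1)).toMonoidHom)
  let f2 : (Matrix (Fin n) (Fin n) A)ˣ →* (Matrix (Fin n) (Fin n) (A ⧸ m2))ˣ :=
    Units.map ((RingHom.mapMatrix (Ideal.Quotient.mk m2)).toMonoidHom)
  haveI : Finite (Matrix (Fin n) (Fin n) (A ⧸ m1)) := Finite.of_equiv _ Matrix.of
  haveI : Finite (Matrix (Fin n) (Fin n) (A ⧸ m2)) := Finite.of_equiv _ Matrix.of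
  haveI : Finite (Matrix (Fin n) (Fin n) (A ⧸ m1))ˣ :=
    Finite.of_injective (Units.val) Units.val_injective
  haveI : Finite (Matrix (Fin n) (Fin n) (A ⧸ m2))ˣ :=
    Finite.of_injective (Units.val) Units.val_injective
  haveI h1 : f1.ker.FiniteIndex := Subgroup.finiteIndex_ker f1
  haveI h2 : f2.ker.FiniteIndex := Subgroup.finiteIndex_ker f2
  refine ⟨f1.ker ⊓ f2.ker, inferInstance, ?_⟩
  intro g hg1 hord
  set x : (Matrix (Fin n) (Fin n) A)ˣ := (g : (Matrix (Fin n) (Fin n) A)ˣ) with hx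
  have hxo : IsOfFinOrder x := (f1.ker ⊓ f2.ker).subtype.isOfFinOrder hord
  have hk0 : orderOf x ≠ 0 := hxo.orderOf_pos.ne'
  have hx1 : x ≠ 1 := fun h => hg1 (Subtype.ext h)
  have hk1 : orderOf x ≠ 1 := fun h => hx1 (orderOf_eq_one_iff.mp h)
  set k := orderOf x with hk
  set r := k.minFac with hr
  have hrp : r.Prime := Nat.minFac_prime hk1
  set y : (Matrix (Fin n) (Fin n) A)ˣ := x ^ (k / r) with hy
  have hyH : y ∈ f1.ker ⊓ f2.ker := Subgroup.pow_mem _ g.2 _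
  have hdvd : k / r ∣ k := Nat.div_dvd_of_dvd k.minFac_dvd
  have hordy : orderOf y = r := by
    have hne : k / r ≠ 0 := by
      have hkpos : 0 < k := Nat.pos_of_ne_zero hk0
      have hrk : r ≤ k := Nat.minFac_le hkpos
      have hrpos : 0 < r := hrp.pos
      exact Nat.ne_of_gt (Nat.div_pos hrk hrpos)
    rw [hy, orderOf_pow' x hne, ← hk, Nat.gcd_eq_right hdvd]
    exact Nat.div_div_self k.minFac_dvd hk0
  have hyr : y ^ r = 1 := by rw [← hordy]; exact pow_orderOf_eq_one y
  have hy1 : y ≠ 1 := by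
    intro h
    rw [h, orderOf_one] at hordy
    exact hrp.one_lt.ne hordy
  have hror : ((r : ℕ) : A ⧸ m1) ≠ 0 ∨ ((r : ℕ) : A ⧸ m2) ≠ 0 := by
    by_contra hc
    push_neg at hc
    have h1 : p1 ∣ r := (CharP.cast_eq_zero_iff (A ⧸ m1) p1 r).mp hc.1
    have h2 : p2 ∣ r := (CharP.cast_eq_zero_iff (A ⧸ m2) p2 r).mp hc.2
    have e1 : p1 = r := (Nat.prime_dvd_prime_iff_eq hp1p hrp).mp h1
    have e2 : p2 = r := (Nat.prime_dvd_prime_iff_eq hp2p hrp).mp h2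
    exact hp12 (e1.trans e2.symm)
  have hker1 : y ∈ f1.ker := hyH.1
  have hker2 : y ∈ f2.ker := hyH.2
  rcases hror with hrm | hrm
  · apply hy1
    refine selberg_key m1 r hrm y ?_ hyr
    have := hker1
    rw [MonoidHom.mem_ker] at this
    have := congrArg (Units.val) this
    simpa [f1, RingHom.mapMatrix_apply] using this
  · apply hy1
    refine selberg_key m2 r hrm y ?_ hyr
    have := hker2
    rw [MonoidHom.mem_ker] at this
    have := congrArg (Units.val) this
    simpa [f2, RingHom.mapMatrix_apply] using this
end

section
/- Let k be a field of characteristic zero in which the only elements integral over ℤ are the images of integers (i.e. for every x ∈ k, if x is integral over ℤ then x lies in the image of ℤ in k). If α ∈ GL_n(k) has finite order, then the trace of α is (the image of) an integer m with |m| ≤ n, and m = n if and only if α is the identity matrix. -/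
open Polynomial

lemma mem_spectrum_of_isRoot_charpoly {K : Type*} [Field K] {n : ℕ}
    (M : Matrix (Fin n) (Fin n) K) {μ : K} (h : M.charpoly.IsRoot μ) :
    μ ∈ spectrum K M := by
  rw [spectrum.mem_iff]
  intro hu
  rw [Matrix.isUnit_iff_isUnit_det] at hu
  have heval : eval μ M.charpoly = ((Matrix.charmatrix M).map (evalRingHom μ)).det := by
    rw [Matrix.charpoly, ← coe_evalRingHom, RingHom.map_det, RingHom.mapMatrix_apply]
  have hmap : (Matrix.charmatrix M).map (evalRingHom μ) =
      (algebraMap K (Matrix (Fin n) (Fin n) K)) μ - M := by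
    ext i j
    rcases eq_or_ne i j with rfl | hij
    · simp [Matrix.charmatrix_apply_eq, Matrix.algebraMap_matrix_apply]
    · simp [Matrix.charmatrix_apply_ne _ _ _ hij, Matrix.algebraMap_matrix_apply, hij]
  rw [hmap] at heval
  rw [Polynomial.IsRoot, heval] at h
  rw [h] at hu
  exact (not_isUnit_zero : ¬IsUnit (0 : K)) hu

lemma root_charpoly_pow_eq_one {K : Type*} [Field K] {n N : ℕ}
    (M : Matrix (Fin n) (Fin n) K) (hM : M ^ N = 1) {μ : K}
    (h : M.charpoly.IsRoot μ) : μ ^ N = 1 := by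
  have hspec : μ ∈ spectrum K M := mem_spectrum_of_isRoot_charpoly M h
  have hmem : μ ^ N ∈ spectrum K (aeval M (X ^ N : K[X])) := by
    have := spectrum.subset_polynomial_aeval M (X ^ N : K[X])
    exact this ⟨μ, hspec, by simp⟩
  rw [map_pow, aeval_X, hM] at hmem
  rw [spectrum.mem_iff] at hmem
  by_contra hne
  apply hmem
  have : (algebraMap K (Matrix (Fin n) (Fin n) K)) (μ ^ N) - 1
      = (algebraMap K (Matrix (Fin n) (Fin n) K)) (μ ^ N - 1) := by
    rw [map_sub, map_one]
  rw [this]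
  exact (isUnit_iff_ne_zero.mpr (sub_ne_zero_of_ne hne)).map _

/-- If `k` is a characteristic-zero field in which the only elements integral over `ℤ`
are the integers, then any finite-order element `α` of `GL_n(k)` has trace an integer
`m` with `|m| ≤ n`, with equality `m = n` iff `α` is the identity. -/
theorem trace_of_finiteOrder (k : Type*) [Field k] [CharZero k]
    (hk : ∀ x : k, IsIntegral ℤ x → ∃ m : ℤ, x = (m : k))
    (n : ℕ) (α : Matrix.GeneralLinearGroup (Fin n) k) (hα : IsOfFinOrder α) :
    ∃ m : ℤ, Matrix.trace (α : Matrix (Fin n) (Fin n) k) = (m : k) ∧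
      |m| ≤ (n : ℤ) ∧ (m = (n : ℤ) ↔ α = 1) := by
  rcases Nat.eq_zero_or_pos n with rfl | hn
  · refine ⟨0, by simp [Matrix.trace], by simp, ?_⟩
    simp only [Nat.cast_zero, eq_self_iff_true, true_iff]
    exact Units.ext (Subsingleton.elim _ _)
  haveI : Nonempty (Fin n) := ⟨⟨0, hn⟩⟩
  set N := orderOf α with hNdef
  have hN : 0 < N := hα.orderOf_pos
  set A : Matrix (Fin n) (Fin n) k := (α : Matrix (Fin n) (Fin n) k) with hAdef
  have hAN : A ^ N = 1 := by
    have := pow_orderOf_eq_one α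
    have h2 := congrArg (Units.val) this
    rw [Units.val_pow_eq_pow_val, Units.val_one] at h2
    exact h2
  set p : k[X] := A.charpoly with hpdef
  have hpm : p.Monic := A.charpoly_monic
  have hpd : p.natDegree = n := by
    rw [hpdef, A.charpoly_natDegree_eq_dim, Fintype.card_fin]
  -- work in the algebraic closure
  set K := AlgebraicClosure k
  set f : k →+* K := algebraMap k K with hfdef
  have hfinj : Function.Injective f := f.injective
  set A' := A.map f with hA'def
  have hA'char : A'.charpoly = p.map f := Matrix.charpoly_map A f
  have hA'N : A' ^ N = 1 := by
    have h2 : f.mapMatrix (A ^ N) = (f.mapMatrix A) ^ N := map_pow _ _ _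
    rw [hAN, map_one] at h2
    exact h2.symm
  have hroot : ∀ μ ∈ (p.map f).roots, μ ^ N = 1 := by
    intro μ hμ
    have : (p.map f).IsRoot μ := isRoot_of_mem_roots hμ
    exact root_charpoly_pow_eq_one A' hA'N (hA'char ▸ this)
  have hsplit : (p.map f).Splits := IsAlgClosed.splits (p.map f)
  have hcard : Multiset.card (p.map f).roots = n := by
    rw [(splits_iff_card_roots).mp hsplit, natDegree_map, hpd]
  -- coefficients of p are integers
  have hint : ∀ μ ∈ (p.map f).roots, IsIntegral ℤ μ := by
    intro μ hμ
    refine ⟨X ^ N - C 1, monic_X_pow_sub_C 1 hN.ne', ?_⟩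
    simp [eval₂_sub, eval₂_pow, hroot μ hμ]
  have hcoeffK : ∀ i, IsIntegral ℤ ((p.map f).coeff i) := by
    have hprod : p.map f = ((p.map f).roots.map fun a => X - C a).prod :=
      hsplit.eq_prod_roots_of_monic (hpm.map f)
    intro i
    rcases le_or_gt i n with hi | hi
    · rw [hprod, Multiset.prod_X_sub_C_coeff _ (by rw [hcard]; exact hi)]
      have hesymm : ((p.map f).roots.esymm (Multiset.card (p.map f).roots - i))
          ∈ integralClosure ℤ K := by
        rw [Multiset.esymm]
        refine Subalgebra.multiset_sum_mem _ ?_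
        intro x hx
        obtain ⟨t, ht, rfl⟩ := Multiset.mem_map.mp hx
        refine Subalgebra.multiset_prod_mem _ ?_
        intro y hy
        exact hint y (Multiset.mem_of_le (Multiset.mem_powersetCard.mp ht).1 hy)
      exact ((isIntegral_one (R := ℤ) (B := K)).neg.pow _).mul
        ((mem_integralClosure_iff ℤ K).mp hesymm)
    · rw [show (p.map f).coeff i = 0 from coeff_eq_zero_of_natDegree_lt
        (by rw [natDegree_map, hpd]; exact hi)]
      exact isIntegral_zero
  -- lift the characteristic polynomial to ℤ[X]
  have hcoeff : ∀ i, ∃ c : ℤ, p.coeff i = (c : k) := by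
    intro i
    apply hk
    have h2 : IsIntegral ℤ (f (p.coeff i)) := by
      rw [← coeff_map]; exact hcoeffK i
    exact (isIntegral_algebraMap_iff hfinj).mp h2
  have hlift : p ∈ lifts (Int.castRingHom k) := by
    rw [lifts_iff_coeff_lifts]
    intro i
    obtain ⟨c, hc⟩ := hcoeff i
    exact ⟨c, by simpa using hc.symm⟩
  obtain ⟨q, hq, hqdeg, hqm⟩ := lifts_and_degree_eq_and_monic hlift hpm
  have hqn : q.natDegree = n := by
    rw [← hpd]; exact natDegree_eq_of_degree_eq hqdeg
  set m : ℤ := -(q.coeff (n - 1)) with hmdef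
  have htrace : Matrix.trace A = (m : k) := by
    rw [Matrix.trace_eq_neg_charpoly_coeff, ← hpdef, ← hq]
    simp [Fintype.card_fin, coeff_map, hmdef]
  -- divisibility chain
  have hdvdK : p.map f ∣ (X ^ N - C 1 : K[X]) ^ n := by
    have hprod : p.map f = ((p.map f).roots.map fun a => X - C a).prod :=
      hsplit.eq_prod_roots_of_monic (hpm.map f)
    rw [hprod]
    have h2 : (((p.map f).roots.map fun a => X - C a)).prod ∣
        (((p.map f).roots.map fun _ => (X ^ N - C 1 : K[X]))).prod := by
      apply Multiset.prod_dvd_prod_of_dvd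
      intro a ha
      rw [dvd_iff_isRoot]
      simp [IsRoot, hroot a ha]
    simpa [Multiset.map_const', Multiset.prod_replicate, hcard] using h2
  have hdvdk : p ∣ (X ^ N - C 1 : k[X]) ^ n := by
    rw [← modByMonic_eq_zero_iff_dvd hpm]
    apply Polynomial.map_injective f hfinj
    rw [Polynomial.map_modByMonic _ hpm, Polynomial.map_zero,
      modByMonic_eq_zero_iff_dvd (hpm.map f)]
    simpa [Polynomial.map_pow, Polynomial.map_sub, Polynomial.map_one] using hdvdK
  have hdvdZ : q ∣ (X ^ N - C 1 : ℤ[X]) ^ n := by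
    rw [← modByMonic_eq_zero_iff_dvd hqm]
    apply Polynomial.map_injective (Int.castRingHom k) Int.cast_injective
    rw [Polynomial.map_modByMonic _ hqm, Polynomial.map_zero, hq,
      modByMonic_eq_zero_iff_dvd hpm]
    simpa [Polynomial.map_pow, Polynomial.map_sub, Polynomial.map_one] using hdvdk
  -- over the complex numbers
  set qc : ℂ[X] := q.map (Int.castRingHom ℂ) with hqcdef
  have hqcm : qc.Monic := hqm.map _
  have hqcn : qc.natDegree = n := by rw [hqcdef, hqm.natDegree_map, hqn]
  have hqcsplit : qc.Splits := IsAlgClosed.splits qc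
  have hqccard : Multiset.card qc.roots = n := by
    rw [(splits_iff_card_roots).mp hqcsplit, hqcn]
  have hqcroot : ∀ z ∈ qc.roots, z ^ N = 1 := by
    intro z hz
    have hdvd : qc ∣ (X ^ N - C 1 : ℂ[X]) ^ n := by
      have h2 := Polynomial.map_dvd (Int.castRingHom ℂ) hdvdZ
      simpa [Polynomial.map_pow, Polynomial.map_sub, Polynomial.map_one] using h2
    have hzr : ((X ^ N - C 1 : ℂ[X]) ^ n).IsRoot z := (isRoot_of_mem_roots hz).dvd hdvd
    have h3 : (z ^ N - 1) ^ n = 0 := by simpa [IsRoot] using hzr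
    have h4 : z ^ N - 1 = 0 := pow_eq_zero_iff hn.ne' |>.mp h3
    exact sub_eq_zero.mp h4
  have habs : ∀ z ∈ qc.roots, ‖z‖ = 1 := by
    intro z hz
    have h1 : ‖z‖ ^ N = 1 := by
      rw [← norm_pow, hqcroot z hz, norm_one]
    rcases lt_trichotomy ‖z‖ 1 with hlt | heq | hgt
    · exact absurd h1 (by nlinarith [pow_lt_one₀ (norm_nonneg z) hlt hN.ne'])
    · exact heq
    · exact absurd h1 (by nlinarith [one_lt_pow₀ hgt hN.ne'])
  have hsum : qc.roots.sum = (m : ℂ) := by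
    have h2 := hqcsplit.nextCoeff_eq_neg_sum_roots_of_monic hqcm
    have h3 : qc.nextCoeff = (-m : ℂ) := by
      rw [nextCoeff, hqcn, if_neg hn.ne', hqcdef, coeff_map, eq_intCast, hmdef]
      push_cast
      ring
    have h4 := h3.symm.trans h2
    exact (neg_inj.mp h4).symm
  have hble : |m| ≤ (n : ℤ) := by
    have h1 : ‖(m : ℂ)‖ ≤ (qc.roots.map (fun z => ‖z‖)).sum := by
      rw [← hsum]; exact norm_multiset_sum_le _
    have hmapeq : qc.roots.map (fun z => ‖z‖) = qc.roots.map (fun _ => (1 : ℝ)) :=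
      Multiset.map_congr rfl (fun z hz => by rw [habs z hz])
    have h2 : (qc.roots.map (fun z => ‖z‖)).sum = (n : ℝ) := by
      rw [hmapeq]
      simp [Multiset.map_const', Multiset.sum_replicate, hqccard]
    have h4 : ‖(m : ℂ)‖ = |(m : ℝ)| := by
      rw [show ((m : ℂ)) = ((m : ℝ) : ℂ) by push_cast; ring, Complex.norm_real,
        Real.norm_eq_abs]
    have h3 : |(m : ℝ)| ≤ (n : ℝ) := by rw [← h4]; linarith [h1, h2 ▸ h1]
    exact_mod_cast h3
  refine ⟨m, htrace, hble, ?_, ?_⟩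
  · -- m = n → α = 1
    intro hm
    have hallone : ∀ z ∈ qc.roots, z = 1 := by
      have hresum : (qc.roots.map Complex.re).sum = (n : ℝ) := by
        have h6 := map_multiset_sum Complex.reAddGroupHom qc.roots
        rw [hsum, hm] at h6
        have h7 : (qc.roots.map (⇑Complex.reAddGroupHom)).sum
            = (qc.roots.map Complex.re).sum := by
          rw [Complex.coe_reAddGroupHom]
        rw [h7] at h6
        rw [← h6]
        simp
      have hzero : ∀ x ∈ qc.roots.map (fun z => 1 - z.re), x = 0 := by
        apply Multiset.all_zero_of_le_zero_le_of_sum_eq_zero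
        · intro x hx
          obtain ⟨z, hz, rfl⟩ := Multiset.mem_map.mp hx
          have := Complex.re_le_norm z
          rw [habs z hz] at this
          linarith
        · have h8 : (qc.roots.map (fun z => 1 - z.re)).sum
              + (qc.roots.map Complex.re).sum
              = (qc.roots.map (fun _ => (1 : ℝ))).sum := by
            rw [← Multiset.sum_map_add]
            simp
          have h9 : (qc.roots.map (fun _ => (1 : ℝ))).sum = (n : ℝ) := by
            simp [Multiset.map_const', Multiset.sum_replicate, hqccard]
          rw [h9, hresum] at h8
          linarith
      intro z hz
      have hre : z.re = 1 := by
        have := hzero _ (Multiset.mem_map_of_mem _ hz)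
        linarith
      have him : z.im = 0 := by
        have h5 : ‖z‖ ^ 2 = z.re * z.re + z.im * z.im := by
          rw [Complex.sq_norm, Complex.normSq_apply]
        rw [habs z hz, hre] at h5
        nlinarith
      exact Complex.ext hre him
    have hroots_rep : qc.roots = Multiset.replicate n 1 :=
      Multiset.eq_replicate.mpr ⟨hqccard, hallone⟩
    have hqc_eq : qc = (X - C 1 : ℂ[X]) ^ n := by
      have h2 : qc = (qc.roots.map fun a => X - C a).prod :=
        hqcsplit.eq_prod_roots_of_monic hqcm
      rw [hroots_rep, Multiset.map_replicate, Multiset.prod_replicate] at h2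
      exact h2
    have hq_eq : q = (X - C 1 : ℤ[X]) ^ n := by
      apply Polynomial.map_injective (Int.castRingHom ℂ) Int.cast_injective
      rw [← hqcdef, hqc_eq]
      simp [Polynomial.map_pow, Polynomial.map_sub]
    have hp_eq : p = (X - C 1 : k[X]) ^ n := by
      rw [← hq, hq_eq]
      simp [Polynomial.map_pow, Polynomial.map_sub]
    -- minimal polynomial argument
    have hAint : IsIntegral k A := Matrix.isIntegral A
    have hμ1 : minpoly k A ∣ (X - C 1 : k[X]) ^ n := by
      rw [← hp_eq]; exact A.minpoly_dvd_charpoly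
    have hμ2 : minpoly k A ∣ (X ^ N - C 1 : k[X]) := by
      apply minpoly.dvd
      rw [map_sub, map_pow, aeval_X, aeval_C, hAN, map_one, sub_self]
    have hsep : (minpoly k A).Separable := by
      refine Polynomial.Separable.of_dvd ?_ hμ2
      exact separable_X_pow_sub_C (1 : k) (Nat.cast_ne_zero.mpr hN.ne') one_ne_zero
    obtain ⟨i, hi, hassoc⟩ := (dvd_prime_pow (prime_X_sub_C (1 : k)) n).mp hμ1
    have hμeq : minpoly k A = (X - C 1 : k[X]) ^ i :=
      eq_of_monic_of_associated (minpoly.monic hAint) ((monic_X_sub_C (1 : k)).pow _) hassoc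
    have hi0 : i ≠ 0 := by
      intro h0
      rw [h0, pow_zero] at hμeq
      have h5 := minpoly.natDegree_pos hAint
      rw [hμeq, natDegree_one] at h5
      omega
    have hi1 : i = 1 :=
      (Polynomial.Separable.of_pow (Polynomial.not_isUnit_X_sub_C (1 : k)) hi0
        (hμeq ▸ hsep)).2
    have haev : aeval A (minpoly k A) = 0 := minpoly.aeval k A
    rw [hμeq, hi1, pow_one, map_sub, aeval_X, aeval_C, map_one, sub_eq_zero] at haev
    exact Units.ext haev
  · -- α = 1 → m = n
    intro h1
    have h2 : Matrix.trace A = (n : k) := by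
      rw [hAdef, h1]
      simp [Matrix.trace_one]
    rw [htrace] at h2
    exact_mod_cast h2
end

section
/- Let G be a subgroup of the isometry group of Euclidean space E^k = ℝ^k whose natural action on E^k is properly discontinuous and cocompact. Let A be the subgroup of G consisting of pure translations (isometries of the form x ↦ x + v for some vector v), and suppose A has finite index in G. Let B be any subgroup of A of finite index in A. Then the centralizer of B in G is exactly A. -/
open Metric RealInnerProductSpace

/-- Let `G` be a group of isometries of Euclidean `k`-space acting properly
discontinuously and cocompactly, `A ≤ G` the subgroup of pure translations in `G`
(assumed of finite index in `G`), and `B ≤ A` of finite index in `A`.  Then the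
centralizer of `B` in `G` is exactly `A`. -/
theorem centralizer_eq_translations (k : ℕ)
    (G A B : Subgroup (EuclideanSpace ℝ (Fin k) ≃ᵢ EuclideanSpace ℝ (Fin k)))
    (hpd : ∀ K L : Set (EuclideanSpace ℝ (Fin k)), IsCompact K → IsCompact L →
      {g : EuclideanSpace ℝ (Fin k) ≃ᵢ EuclideanSpace ℝ (Fin k) |
        g ∈ G ∧ ((g : EuclideanSpace ℝ (Fin k) ≃ᵢ EuclideanSpace ℝ (Fin k)) '' K ∩ L).Nonempty}.Finite)
    (hcc : ∃ C : Set (EuclideanSpace ℝ (Fin k)), IsCompact C ∧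
      ⋃ g ∈ G, (g : EuclideanSpace ℝ (Fin k) ≃ᵢ EuclideanSpace ℝ (Fin k)) '' C = Set.univ)
    (hA : ∀ g : EuclideanSpace ℝ (Fin k) ≃ᵢ EuclideanSpace ℝ (Fin k),
      g ∈ A ↔ g ∈ G ∧ ∃ v : EuclideanSpace ℝ (Fin k), ∀ x, g x = x + v)
    (hAG : A ≤ G) (hBA : B ≤ A)
    (hAfin : A.relIndex G ≠ 0) (hBfin : B.relIndex A ≠ 0) :
    Subgroup.centralizer (B : Set (EuclideanSpace ℝ (Fin k) ≃ᵢ EuclideanSpace ℝ (Fin k))) ⊓ G = A := by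
  set E := EuclideanSpace ℝ (Fin k) with hE
  obtain ⟨C, hC, hCcov⟩ := hcc
  -- B has finite index in G
  have hBG : B.relIndex G ≠ 0 := by
    rw [← Subgroup.relIndex_mul_relIndex B A G hBA hAG]
    exact mul_ne_zero hBfin hAfin
  have hfin : Finite (G ⧸ B.subgroupOf G) := by
    have : Nat.card (G ⧸ B.subgroupOf G) ≠ 0 := hBG
    exact (Nat.card_ne_zero.mp this).2
  -- a compact set whose B-translates cover E
  set C' : Set E := ⋃ q : G ⧸ B.subgroupOf G,
    ((((Quotient.out q)⁻¹ : G) : E ≃ᵢ E)) '' C with hC'def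
  have hC' : IsCompact C' := isCompact_iUnion fun q =>
    hC.image (((Quotient.out q)⁻¹ : G) : E ≃ᵢ E).continuous
  have hC'cov : ∀ x : E, ∃ b ∈ B, ∃ c ∈ C', b c = x := by
    intro x
    have hx : x ∈ ⋃ g ∈ G, (g : E ≃ᵢ E) '' C := hCcov ▸ Set.mem_univ x
    simp only [Set.mem_iUnion] at hx
    obtain ⟨g, hgG, c, hc, hgc⟩ := hx
    set gg : G := ⟨g, hgG⟩ with hgg
    set q : G ⧸ B.subgroupOf G := QuotientGroup.mk gg⁻¹ with hq
    set t : G := Quotient.out q with ht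
    have hmk : (QuotientGroup.mk t : G ⧸ B.subgroupOf G) = QuotientGroup.mk gg⁻¹ :=
      QuotientGroup.out_eq' q
    have hmem : t⁻¹ * gg⁻¹ ∈ B.subgroupOf G := (QuotientGroup.eq ).mp hmk
    have hb : ((t⁻¹ * gg⁻¹ : G) : E ≃ᵢ E)⁻¹ ∈ B := by
      have := (Subgroup.mem_subgroupOf).mp hmem
      exact B.inv_mem this
    refine ⟨((t⁻¹ * gg⁻¹ : G) : E ≃ᵢ E)⁻¹, hb, ((t⁻¹ : G) : E ≃ᵢ E) c, ?_, ?_⟩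
    · exact Set.mem_iUnion.mpr ⟨q, ⟨c, hc, rfl⟩⟩
    · have : ((t⁻¹ * gg⁻¹ : G) : E ≃ᵢ E)⁻¹ = g * ((t : G) : E ≃ᵢ E) := by
        push_cast
        rw [mul_inv_rev, inv_inv, inv_inv]
      rw [this]
      have htc : ((t⁻¹ : G) : E ≃ᵢ E) c = (((t : G) : E ≃ᵢ E))⁻¹ c := by push_cast; rfl
      rw [htc, IsometryEquiv.mul_apply]
      rw [show (((t:G) : E ≃ᵢ E)) ((((t:G) : E ≃ᵢ E))⁻¹ c) = c from
        ((t:G) : E ≃ᵢ E).apply_symm_apply c]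
      exact hgc
  obtain ⟨R, hR⟩ : ∃ R : ℝ, C' ⊆ closedBall 0 R := hC'.isBounded.subset_closedBall 0
  -- the set of translation vectors of B spans E
  set V : Set E := {v | ∃ b ∈ B, ∀ x, b x = x + v} with hV
  set W : Submodule ℝ E := Submodule.span ℝ V with hW
  have hWtop : W = ⊤ := by
    by_contra hne
    have : Wᗮ ≠ ⊥ := fun h => hne (Submodule.orthogonal_eq_bot_iff.mp h)
    obtain ⟨u, huW, hu0⟩ := Submodule.exists_mem_ne_zero_of_ne_bot this
    set u' : E := ‖u‖⁻¹ • u with hu'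
    have hu'W : u' ∈ Wᗮ := Wᗮ.smul_mem _ huW
    have hu'n : ‖u'‖ = 1 := by
      rw [hu', norm_smul, norm_inv, norm_norm, inv_mul_cancel₀ (norm_ne_zero_iff.mpr hu0)]
    obtain ⟨b, hbB, c, hcC', hbc⟩ := hC'cov ((R + 1) • u')
    obtain ⟨hbG, v, hv⟩ := (hA b).mp (hBA hbB)
    have hvV : v ∈ W := Submodule.subset_span ⟨b, hbB, hv⟩
    have hcv : c + v = (R + 1) • u' := by rw [← hv c, hbc]
    have hcR : ‖(R + 1) • u' - v‖ ≤ R := by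
      have : (R + 1) • u' - v = c := by rw [← hcv]; abel
      rw [this]
      simpa using (mem_closedBall.mp (hR hcC'))
    have hinner : (inner ℝ ((R + 1) • u' - v) u' : ℝ) = R + 1 := by
      rw [inner_sub_left, real_inner_smul_left,
        Submodule.inner_right_of_mem_orthogonal hvV hu'W, real_inner_self_eq_norm_sq, hu'n]
      ring
    have habs : |(inner ℝ ((R + 1) • u' - v) u' : ℝ)| ≤ ‖(R + 1) • u' - v‖ * ‖u'‖ :=
      abs_real_inner_le_norm _ _
    rw [hinner, hu'n, mul_one] at habs
    have : R + 1 ≤ R := le_trans (le_abs_self _) (le_trans habs hcR)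
    linarith
  apply le_antisymm
  · rintro g ⟨hgc, hgG⟩
    set L := g.toRealLinearIsometryEquiv with hL
    have hfix : ∀ v ∈ V, L v = v := by
      rintro v ⟨b, hbB, hbv⟩
      have hcomm : b * g = g * b := Subgroup.mem_centralizer_iff.mp hgc b hbB
      have := congrArg (fun f : E ≃ᵢ E => f 0) hcomm
      simp only [IsometryEquiv.mul_apply] at this
      rw [hbv (g 0)] at this
      -- this : g 0 + v = g (b 0)
      rw [hbv 0, zero_add] at this
      rw [IsometryEquiv.toRealLinearIsometryEquiv_apply, ← this]
      abel
    have hker : W ≤ LinearMap.ker ((L : E →ₗ[ℝ] E) - LinearMap.id) := by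
      rw [hW, Submodule.span_le]
      intro v hv
      simp only [SetLike.mem_coe, LinearMap.mem_ker, LinearMap.sub_apply, LinearMap.id_apply,
        LinearIsometryEquiv.coe_coe, sub_eq_zero]
      exact hfix v hv
    have hLid : ∀ x : E, L x = x := by
      intro x
      have : x ∈ LinearMap.ker ((L : E →ₗ[ℝ] E) - LinearMap.id) := by
        apply hker; rw [hWtop]; trivial
      simpa [sub_eq_zero] using this
    refine (hA g).mpr ⟨hgG, g 0, fun x => ?_⟩
    have h1 : g x - g 0 = x := by
      have := hLid x
      rwa [IsometryEquiv.toRealLinearIsometryEquiv_apply] at this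
    exact eq_add_of_sub_eq h1
  · intro a haA
    obtain ⟨haG, w, hw⟩ := (hA a).mp haA
    refine ⟨Subgroup.mem_centralizer_iff.mpr fun b hbB => ?_, haG⟩
    obtain ⟨hbG, v, hv⟩ := (hA b).mp (hBA hbB)
    refine IsometryEquiv.ext fun x => ?_
    simp only [IsometryEquiv.mul_apply, hv, hw]
    abel
end

section
/- Let G be a torsion-free group with a subgroup of finite index isomorphic to ℤ^m. Then there is an injective homomorphism φ from G to the isometry group of Euclidean space E^m = ℝ^m such that the induced action of G on E^m is free (no nontrivial g ∈ G fixes a point of E^m), properly discontinuous (for all compact K, L ⊆ E^m the set {g ∈ G : φ(g)(K) ∩ L ≠ ∅} is finite), and cocompact (there is a compact C ⊆ E^m with ⋃_{g ∈ G} φ(g)(C) = E^m). -/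
namespace CrysAux

structure Data (G : Type*) [Group G] (m : ℕ) where
  N : Subgroup G
  normal : N.Normal
  fin : N.FiniteIndex
  j : N → Fin m → ℤ
  j_mul : ∀ a b : N, j (a * b) = j a + j b
  j_inj : Function.Injective j
  d : ℕ
  d_pos : 0 < d
  sur : ∀ v : Fin m → ℤ, ∃ n : N, j n = d • v

variable {G : Type*} [Group G] {m : ℕ} (D : Data G m)

section AddLike
variable {Γ : Type*} [Group Γ] {H : Type*} [AddCommGroup H]
  (μ : Γ → H) (hμ : ∀ a b : Γ, μ (a * b) = μ a + μ b)

/-- bundle an "additive" map into a `MonoidHom`. -/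
private def bun : Γ →* Multiplicative H :=
  MonoidHom.mk' (fun n => Multiplicative.ofAdd (μ n)) (by intro a b; simp [hμ])

include hμ

lemma hom_one : μ 1 = 0 := by have h := hμ 1 1; simpa using h.symm

lemma hom_pow (n : Γ) (k : ℕ) : μ (n ^ k) = k • μ n := by
  have h := map_pow (bun μ hμ) n k
  have h2 : ((bun μ hμ) (n ^ k)).toAdd = (((bun μ hμ) n) ^ k).toAdd := by rw [h]
  simpa [bun, toAdd_pow] using h2

lemma hom_zpow (n : Γ) (k : ℤ) : μ (n ^ k) = k • μ n := by
  have h := map_zpow (bun μ hμ) n k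
  have h2 : ((bun μ hμ) (n ^ k)).toAdd = (((bun μ hμ) n) ^ k).toAdd := by rw [h]
  simpa [bun, toAdd_zpow] using h2

lemma hom_listProd (l : List Γ) : μ l.prod = (l.map μ).sum := by
  induction l with
  | nil => simpa using hom_one μ hμ
  | cons a t ih => simp [hμ, ih]

end AddLike

lemma Data.j_one : D.j 1 = 0 := hom_one D.j D.j_mul

lemma Data.N_comm (a b : D.N) : a * b = b * a := by
  apply D.j_inj
  rw [D.j_mul, D.j_mul, add_comm]

/-- the lattice embedding into `ℝ^m`. -/
def Data.iota (n : D.N) : Fin m → ℝ := fun i => (D.j n i : ℝ)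

lemma Data.iota_mul (a b : D.N) : D.iota (a * b) = D.iota a + D.iota b := by
  funext i; simp [iota, D.j_mul]

lemma Data.iota_inj : Function.Injective D.iota := by
  intro a b hab
  apply D.j_inj
  funext i
  have h2 : (D.j a i : ℝ) = (D.j b i : ℝ) := congrFun hab i
  exact_mod_cast h2

/-- conjugation action on `N`. -/
def Data.c (g : G) (n : D.N) : D.N := ⟨g * n * g⁻¹, D.normal.conj_mem n.1 n.2 g⟩

lemma Data.c_mul (g : G) (a b : D.N) : D.c g (a * b) = D.c g a * D.c g b := by
  apply Subtype.ext; simp only [Data.c, Subgroup.coe_mul]; group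

lemma Data.c_c (g g' : G) (n : D.N) : D.c g (D.c g' n) = D.c (g * g') n := by
  apply Subtype.ext; simp [c]; group

lemma Data.c_one (n : D.N) : D.c 1 n = n := by
  apply Subtype.ext; simp [c]

lemma Data.c_coe (n₀ n : D.N) : D.c (n₀ : G) n = n := by
  apply Subtype.ext
  show (n₀ : G) * n * (n₀ : G)⁻¹ = n
  have : (n₀ * n : D.N) = n * n₀ := D.N_comm n₀ n
  have h2 : (n₀ : G) * n = (n : G) * n₀ := congrArg Subtype.val this
  rw [h2]
  group

/-- basis elements of the lattice: `j (nn i) = d • single i 1`. -/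
noncomputable def Data.nn (i : Fin m) : D.N := (D.sur (Pi.single i 1)).choose

lemma Data.j_nn (i : Fin m) : D.j (D.nn i) = D.d • Pi.single i 1 :=
  (D.sur (Pi.single i 1)).choose_spec

lemma Data.iota_nn (i : Fin m) : D.iota (D.nn i) = (D.d : ℝ) • (Pi.single i 1 : Fin m → ℝ) := by
  funext k
  simp [iota, j_nn, Pi.single_apply]



/-- conjugation as a `MonoidHom`. -/
def Data.cm (g : G) : D.N →* D.N := MonoidHom.mk' (D.c g) (D.c_mul g)

lemma Data.c_pow (g : G) (n : D.N) (k : ℕ) : D.c g (n ^ k) = (D.c g n) ^ k :=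
  map_pow (D.cm g) n k

lemma Data.c_zpow (g : G) (n : D.N) (k : ℤ) : D.c g (n ^ k) = (D.c g n) ^ k :=
  map_zpow (D.cm g) n k

lemma Data.c_listProd (g : G) (l : List D.N) : D.c g l.prod = (l.map (D.c g)).prod :=
  map_list_prod (D.cm g) l

/-- the linear part of the action. -/
noncomputable def Data.alpha (g : G) : (Fin m → ℝ) →ₗ[ℝ] (Fin m → ℝ) :=
  ∑ i : Fin m, LinearMap.smulRight (LinearMap.proj i)
    (((D.d : ℝ))⁻¹ • D.iota (D.c g (D.nn i)))

lemma Data.alpha_apply (g : G) (x : Fin m → ℝ) :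
    D.alpha g x = ∑ i : Fin m, x i • (((D.d : ℝ))⁻¹ • D.iota (D.c g (D.nn i))) := by
  simp [alpha]

lemma Data.alpha_single (g : G) (i : Fin m) :
    D.alpha g (Pi.single i 1) = ((D.d : ℝ))⁻¹ • D.iota (D.c g (D.nn i)) := by
  rw [alpha_apply]
  rw [Finset.sum_eq_single i]
  · simp
  · intro b _ hb
    simp [Pi.single_apply, hb]
  · simp

lemma Data.d_ne : (D.d : ℝ) ≠ 0 := Nat.cast_ne_zero.mpr D.d_pos.ne'

/-- key equivariance property. -/
lemma Data.alpha_iota (g : G) (n : D.N) : D.alpha g (D.iota n) = D.iota (D.c g n) := by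
  have hcmul : ∀ a b : D.N, D.iota (D.c g (a * b)) = D.iota (D.c g a) + D.iota (D.c g b) := by
    intro a b; rw [D.c_mul, D.iota_mul]
  -- the element `n ^ d` equals the product of `nn i ^ (j n i)`
  set l : List D.N := List.ofFn (fun i : Fin m => D.nn i ^ (D.j n i)) with hl
  have hjl : D.j l.prod = D.d • D.j n := by
    rw [hom_listProd D.j D.j_mul]
    rw [hl, List.map_ofFn, List.sum_ofFn]
    funext i
    simp only [Function.comp_apply, hom_zpow D.j D.j_mul, Finset.sum_apply, Pi.smul_apply]
    simp only [D.j_nn]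
    rw [Finset.sum_eq_single i]
    · simp [mul_comm]
    · intro b _ hb
      simp [Pi.single_apply, hb]
    · simp
  have hnd : n ^ D.d = l.prod := by
    apply D.j_inj
    rw [hjl, hom_pow D.j D.j_mul]
  -- now compute `d • both sides`
  apply smul_right_injective (Fin m → ℝ) D.d_ne
  have hrhs : (D.d : ℝ) • D.iota (D.c g n)
      = ∑ i : Fin m, (D.j n i : ℝ) • D.iota (D.c g (D.nn i)) := by
    have h1 : (D.d : ℝ) • D.iota (D.c g n) = D.iota ((D.c g n) ^ D.d) := by
      rw [hom_pow D.iota D.iota_mul]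
      rw [← Nat.cast_smul_eq_nsmul ℝ]
    rw [h1, ← D.c_pow, hnd, D.c_listProd, hom_listProd D.iota D.iota_mul]
    rw [hl, List.map_ofFn, List.map_ofFn, List.sum_ofFn]
    congr 1
    funext i
    simp only [Function.comp_apply]
    rw [D.c_zpow, hom_zpow D.iota D.iota_mul, ← Int.cast_smul_eq_zsmul ℝ]
  show (D.d:ℝ) • (D.alpha g (D.iota n)) = (D.d:ℝ) • D.iota (D.c g n)
  rw [hrhs, alpha_apply, Finset.smul_sum]
  congr 1
  funext i
  rw [smul_smul, smul_smul]
  have : (D.d:ℝ) * D.iota n i * (D.d:ℝ)⁻¹ = D.iota n i := by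
    rw [mul_comm (D.d:ℝ), mul_assoc, mul_inv_cancel₀ D.d_ne, mul_one]
  rw [this]
  rfl

lemma ext_pi {L L' : (Fin m → ℝ) →ₗ[ℝ] (Fin m → ℝ)}
    (h : ∀ i, L (Pi.single i 1) = L' (Pi.single i 1)) : L = L' := by
  apply Module.Basis.ext (Pi.basisFun ℝ (Fin m))
  intro i
  simpa using h i

lemma Data.alpha_mul (g g' : G) : D.alpha (g * g') = (D.alpha g).comp (D.alpha g') := by
  apply ext_pi
  intro i
  rw [alpha_single, LinearMap.comp_apply, alpha_single, map_smul, D.alpha_iota, D.c_c]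

lemma Data.alpha_one : D.alpha (1 : G) = LinearMap.id := by
  apply ext_pi
  intro i
  rw [alpha_single, D.c_one, D.iota_nn, smul_smul, inv_mul_cancel₀ D.d_ne, one_smul,
    LinearMap.id_apply]

lemma Data.alpha_coe (n₀ : D.N) : D.alpha (n₀ : G) = LinearMap.id := by
  apply ext_pi
  intro i
  rw [alpha_single, D.c_coe, D.iota_nn, smul_smul, inv_mul_cancel₀ D.d_ne, one_smul,
    LinearMap.id_apply]

lemma Data.alpha_coe_mul (n₀ : D.N) (h : G) : D.alpha ((n₀ : G) * h) = D.alpha h := by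
  rw [D.alpha_mul, D.alpha_coe, LinearMap.id_comp]

lemma Data.mem_of_mk_eq {a b : G} (h : (a : G ⧸ D.N) = (b : G ⧸ D.N)) :
    a * b⁻¹ ∈ D.N := by
  letI := D.normal
  rw [← QuotientGroup.eq_one_iff, QuotientGroup.mk_mul, QuotientGroup.mk_inv, h,
    mul_inv_cancel]

lemma Data.alpha_congr {h h' : G} (hh : (h : G ⧸ D.N) = (h' : G ⧸ D.N)) :
    D.alpha h = D.alpha h' := by
  have : h = ((⟨h * h'⁻¹, D.mem_of_mk_eq hh⟩ : D.N) : G) * h' := by group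
  rw [this, D.alpha_coe_mul]

/-- representative of the coset of `g`. -/
noncomputable def Data.rep (g : G) : G := Quotient.out (g : G ⧸ D.N)

lemma Data.mk_rep (g : G) : ((D.rep g : G) : G ⧸ D.N) = (g : G ⧸ D.N) :=
  QuotientGroup.out_eq' _

lemma Data.rep_congr {g g' : G} (h : (g : G ⧸ D.N) = (g' : G ⧸ D.N)) : D.rep g = D.rep g' := by
  unfold Data.rep; rw [h]

/-- the `N`-part of `g`. -/
noncomputable def Data.nPart (g : G) : D.N :=
  ⟨g * (D.rep g)⁻¹, by
    have := D.mem_of_mk_eq (D.mk_rep g).symm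
    exact this⟩

lemma Data.nPart_mul_rep (g : G) : ((D.nPart g : G)) * D.rep g = g := by
  simp [nPart]

lemma Data.nPart_coe_mul (n : D.N) (h : G) :
    D.nPart ((n : G) * h) = n * D.nPart h := by
  letI := D.normal
  apply Subtype.ext
  show (n : G) * h * (D.rep ((n:G) * h))⁻¹ = (n : G) * (h * (D.rep h)⁻¹)
  have hq : (((n:G) * h : G) : G ⧸ D.N) = (h : G ⧸ D.N) := by
    rw [QuotientGroup.mk_mul, QuotientGroup.eq_one_iff (n : G) |>.mpr n.2, one_mul]
  rw [D.rep_congr hq, mul_assoc]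

/-- translational defect. -/
noncomputable def Data.sigma (g : G) : Fin m → ℝ := D.iota (D.nPart g)

lemma Data.sigma_coe_mul (n : D.N) (h : G) :
    D.sigma ((n : G) * h) = D.iota n + D.sigma h := by
  unfold Data.sigma
  rw [D.nPart_coe_mul, D.iota_mul]

/-- the "cocycle defect" function. -/
noncomputable def Data.f (g h : G) : Fin m → ℝ := D.sigma (g * h) - D.alpha g (D.sigma h)

lemma Data.f_coe (g : G) (n : D.N) (h : G) : D.f g ((n : G) * h) = D.f g h := by
  unfold Data.f
  have h1 : g * ((n : G) * h) = ((D.c g n : G)) * (g * h) := by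
    show g * ((n : G) * h) = (g * (n:G) * g⁻¹) * (g * h)
    group
  rw [h1, D.sigma_coe_mul, D.sigma_coe_mul, map_add, D.alpha_iota]
  abel

lemma Data.f_congr (g : G) {h h' : G} (hh : (h : G ⧸ D.N) = (h' : G ⧸ D.N)) :
    D.f g h = D.f g h' := by
  have : h = ((⟨h * h'⁻¹, D.mem_of_mk_eq hh⟩ : D.N) : G) * h' := by group
  conv_lhs => rw [this, D.f_coe]

lemma Data.f_mul (g₁ g₂ h : G) :
    D.f (g₁ * g₂) h = D.f g₁ (g₂ * h) + D.alpha g₁ (D.f g₂ h) := by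
  unfold Data.f
  rw [D.alpha_mul, mul_assoc]
  simp only [LinearMap.comp_apply, map_sub]
  abel

/-- a fintype structure on the quotient. -/
noncomputable def Data.qft : Fintype (G ⧸ D.N) :=
  letI := D.fin
  Fintype.ofFinite _

/-- the averaged translation cocycle. -/
noncomputable def Data.tau (g : G) : Fin m → ℝ :=
  letI := D.qft
  ((Fintype.card (G ⧸ D.N) : ℝ))⁻¹ • ∑ q : G ⧸ D.N, D.f g q.out

lemma Data.card_ne : letI := D.qft; ((Fintype.card (G ⧸ D.N) : ℝ)) ≠ 0 := by
  letI := D.qft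
  exact Nat.cast_ne_zero.mpr Fintype.card_ne_zero

lemma Data.tau_mul (g₁ g₂ : G) :
    D.tau (g₁ * g₂) = D.tau g₁ + D.alpha g₁ (D.tau g₂) := by
  letI := D.normal
  letI := D.qft
  unfold Data.tau
  rw [map_smul, ← smul_add]
  congr 1
  have hsum : ∑ q : G ⧸ D.N, D.f (g₁ * g₂) q.out
      = ∑ q : G ⧸ D.N, (D.f g₁ (g₂ * q.out) + D.alpha g₁ (D.f g₂ q.out)) := by
    apply Finset.sum_congr rfl
    intro q _
    exact D.f_mul g₁ g₂ q.out
  rw [hsum, Finset.sum_add_distrib]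
  congr 1
  · -- reindex by left multiplication
    have h1 : ∀ q : G ⧸ D.N, D.f g₁ (g₂ * q.out) = D.f g₁ ((((g₂ : G ⧸ D.N) * q)).out) := by
      intro q
      apply D.f_congr
      rw [QuotientGroup.out_eq', QuotientGroup.mk_mul, QuotientGroup.out_eq']
    calc ∑ q : G ⧸ D.N, D.f g₁ (g₂ * q.out)
        = ∑ q : G ⧸ D.N, D.f g₁ ((((g₂ : G ⧸ D.N) * q)).out) := by
          exact Finset.sum_congr rfl (fun q _ => h1 q)
      _ = ∑ q : G ⧸ D.N, D.f g₁ q.out := by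
          exact Fintype.sum_equiv (Equiv.mulLeft (g₂ : G ⧸ D.N)) _ _ (fun q => rfl)
  · rw [map_sum]

lemma Data.tau_coe (n : D.N) : D.tau (n : G) = D.iota n := by
  letI := D.qft
  unfold Data.tau
  have h1 : ∀ q : G ⧸ D.N, D.f (n : G) q.out = D.iota n := by
    intro q
    unfold Data.f
    rw [D.sigma_coe_mul, D.alpha_coe, LinearMap.id_apply]
    abel
  rw [Finset.sum_congr rfl (fun q _ => h1 q), Finset.sum_const, Finset.card_univ,
    ← Nat.cast_smul_eq_nsmul ℝ, smul_smul, inv_mul_cancel₀ D.card_ne, one_smul]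

lemma Data.tau_one : D.tau (1 : G) = 0 := by
  have h := D.tau_coe 1
  rw [OneMemClass.coe_one] at h
  rw [h]
  have h2 : D.iota (1 : D.N) = 0 := by
    funext i; simp [Data.iota, D.j_one]
  rw [h2]

/-- the affine action on `ℝ^m`. -/
noncomputable def Data.psi (g : G) (x : Fin m → ℝ) : Fin m → ℝ :=
  D.alpha g x + D.tau g

lemma Data.psi_mul (g₁ g₂ : G) (x : Fin m → ℝ) :
    D.psi (g₁ * g₂) x = D.psi g₁ (D.psi g₂ x) := by
  unfold Data.psi
  rw [D.alpha_mul, D.tau_mul]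
  simp only [LinearMap.comp_apply, map_add]
  abel

lemma Data.psi_one (x : Fin m → ℝ) : D.psi 1 x = x := by
  unfold Data.psi
  rw [D.alpha_one, D.tau_one]
  simp

lemma Data.psi_coe (n : D.N) (x : Fin m → ℝ) : D.psi (n : G) x = x + D.iota n := by
  unfold Data.psi
  rw [D.alpha_coe, D.tau_coe]
  simp

lemma Data.psi_inv (g : G) (x : Fin m → ℝ) : D.psi g⁻¹ (D.psi g x) = x := by
  rw [← D.psi_mul, inv_mul_cancel, D.psi_one]

lemma Data.psi_sub (g : G) (x y : Fin m → ℝ) :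
    D.psi g x - D.psi g y = D.alpha g (x - y) := by
  unfold Data.psi
  rw [map_sub]
  abel

lemma Data.psi_continuous (g : G) : Continuous (D.psi g) := by
  unfold Data.psi
  exact ((D.alpha g).continuous_of_finiteDimensional).add continuous_const

open Matrix in
/-- the matrix of `alpha g`. -/
noncomputable def Data.A (g : G) : Matrix (Fin m) (Fin m) ℝ :=
  LinearMap.toMatrix' (D.alpha g)

open Matrix
open scoped MatrixOrder

lemma Data.A_mulVec (g : G) (x : Fin m → ℝ) : D.A g *ᵥ x = D.alpha g x := by
  rw [Data.A, ← Matrix.toLin'_apply, Matrix.toLin'_toMatrix']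

lemma Data.A_mul (g₁ g₂ : G) : D.A (g₁ * g₂) = D.A g₁ * D.A g₂ := by
  rw [Data.A, D.alpha_mul, LinearMap.toMatrix'_comp]
  rfl

lemma Data.A_congr {h h' : G} (hh : (h : G ⧸ D.N) = (h' : G ⧸ D.N)) : D.A h = D.A h' := by
  unfold Data.A
  rw [D.alpha_congr hh]

lemma Data.A_one : D.A (1 : G) = 1 := by
  unfold Data.A
  rw [D.alpha_one, LinearMap.toMatrix'_id]

/-- the Gram matrix of the averaged inner product. -/
noncomputable def Data.M : Matrix (Fin m) (Fin m) ℝ :=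
  letI := D.qft
  ∑ q : G ⧸ D.N, (D.A q.out)ᵀ * D.A q.out

lemma Data.quad_eq (x y : Fin m → ℝ) :
    letI := D.qft
    x ⬝ᵥ (D.M *ᵥ y) = ∑ q : G ⧸ D.N, (D.A q.out *ᵥ x) ⬝ᵥ (D.A q.out *ᵥ y) := by
  letI := D.qft
  unfold Data.M
  have key : ∀ s : Finset (G ⧸ D.N),
      x ⬝ᵥ ((∑ q ∈ s, (D.A q.out)ᵀ * D.A q.out) *ᵥ y)
      = ∑ q ∈ s, (D.A q.out *ᵥ x) ⬝ᵥ (D.A q.out *ᵥ y) := by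
    intro s
    induction s using Finset.cons_induction with
    | empty => simp [Matrix.zero_mulVec]
    | cons a s ha ih =>
      rw [Finset.sum_cons, Finset.sum_cons, Matrix.add_mulVec, dotProduct_add, ih]
      congr 1
      rw [← Matrix.mulVec_mulVec, Matrix.dotProduct_mulVec, Matrix.vecMul_transpose]
  exact key Finset.univ

lemma Data.M_posDef : D.M.PosDef := by
  letI := D.normal
  letI := D.qft
  rw [Matrix.posDef_iff_dotProduct_mulVec]
  constructor
  · unfold Matrix.IsHermitian
    rw [conjTranspose_eq_transpose_of_trivial]
    unfold Data.M
    rw [Matrix.transpose_sum]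
    apply Finset.sum_congr rfl
    intro q _
    rw [Matrix.transpose_mul, Matrix.transpose_transpose]
  · intro x hx
    have hstar : (star x : Fin m → ℝ) = x := by
      funext i; simp
    rw [hstar, D.quad_eq]
    have hpos : (0:ℝ) < (D.A ((1 : G ⧸ D.N)).out *ᵥ x) ⬝ᵥ (D.A ((1 : G ⧸ D.N)).out *ᵥ x) := by
      have hA1 : D.A ((1 : G ⧸ D.N)).out = 1 := by
        have : (((1 : G ⧸ D.N).out : G) : G ⧸ D.N) = ((1 : G) : G ⧸ D.N) := by
          rw [QuotientGroup.out_eq']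
          rfl
        rw [D.A_congr this, D.A_one]
      rw [hA1, Matrix.one_mulVec]
      have := Matrix.dotProduct_self_star_pos_iff (v := x) |>.mpr hx
      simpa using this
    apply lt_of_lt_of_le hpos
    apply Finset.single_le_sum (f := fun q : G ⧸ D.N => (D.A q.out *ᵥ x) ⬝ᵥ (D.A q.out *ᵥ x))
    · intro q _
      have : ∀ w : Fin m → ℝ, (0:ℝ) ≤ w ⬝ᵥ w := by
        intro w
        have := dotProduct_self_star_nonneg (v := w)
        simpa using this
      exact this _
    · exact Finset.mem_univ _

lemma Data.M_invariant (g : G) : (D.A g)ᵀ * D.M * D.A g = D.M := by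
  letI := D.normal
  letI := D.qft
  unfold Data.M
  rw [Matrix.mul_sum, Finset.sum_mul]
  have h1 : ∀ q : G ⧸ D.N,
      (D.A g)ᵀ * ((D.A q.out)ᵀ * D.A q.out) * D.A g
      = (D.A ((q * (g : G ⧸ D.N)).out))ᵀ * D.A ((q * (g : G ⧸ D.N)).out) := by
    intro q
    have h2 : D.A (q.out * g) = D.A ((q * (g : G ⧸ D.N)).out) := by
      apply D.A_congr
      rw [QuotientGroup.mk_mul, QuotientGroup.out_eq', QuotientGroup.out_eq']
    rw [← h2, D.A_mul, Matrix.transpose_mul]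
    noncomm_ring
  calc ∑ q : G ⧸ D.N, (D.A g)ᵀ * ((D.A q.out)ᵀ * D.A q.out) * D.A g
      = ∑ q : G ⧸ D.N, (D.A ((q * (g : G ⧸ D.N)).out))ᵀ * D.A ((q * (g : G ⧸ D.N)).out) := by
        exact Finset.sum_congr rfl (fun q _ => h1 q)
    _ = ∑ q : G ⧸ D.N, (D.A q.out)ᵀ * D.A q.out := by
        exact Fintype.sum_equiv (Equiv.mulRight (g : G ⧸ D.N)) _ _ (fun q => rfl)

lemma Data.quad_invariant (g : G) (z : Fin m → ℝ) :
    (D.alpha g z) ⬝ᵥ (D.M *ᵥ (D.alpha g z)) = z ⬝ᵥ (D.M *ᵥ z) := by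
  conv_rhs => rw [← D.M_invariant g]
  rw [← D.A_mulVec]
  rw [← Matrix.mulVec_mulVec, ← Matrix.mulVec_mulVec, Matrix.dotProduct_mulVec z,
    Matrix.vecMul_transpose]

/-- symmetric positive square root of `M`. -/
noncomputable def Data.S : Matrix (Fin m) (Fin m) ℝ :=
  CFC.sqrt D.M

lemma Data.S_mul_S : D.S * D.S = D.M := CFC.sqrt_mul_sqrt_self _ D.M_posDef.posSemidef.nonneg

lemma Data.S_transpose : (D.S)ᵀ = D.S := by
  have h := (CFC.sqrt_nonneg D.M).posSemidef.isHermitian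
  rwa [Matrix.IsHermitian, conjTranspose_eq_transpose_of_trivial] at h

lemma Data.S_det_ne : D.S.det ≠ 0 := by
  intro h
  have h2 : D.M.det = 0 := by
    rw [← D.S_mul_S, Matrix.det_mul, h, mul_zero]
  exact (D.M_posDef.det_pos).ne' h2

lemma Data.S_isUnit_det : IsUnit D.S.det := isUnit_iff_ne_zero.mpr D.S_det_ne

lemma Data.S_inv_mulVec_cancel (x : Fin m → ℝ) : D.S *ᵥ (D.S⁻¹ *ᵥ x) = x := by
  rw [Matrix.mulVec_mulVec, Matrix.mul_nonsing_inv _ D.S_isUnit_det, Matrix.one_mulVec]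

lemma Data.S_mulVec_cancel (x : Fin m → ℝ) : D.S⁻¹ *ᵥ (D.S *ᵥ x) = x := by
  rw [Matrix.mulVec_mulVec, Matrix.nonsing_inv_mul _ D.S_isUnit_det, Matrix.one_mulVec]

lemma Data.S_dot (x y : Fin m → ℝ) : (D.S *ᵥ x) ⬝ᵥ (D.S *ᵥ y) = x ⬝ᵥ (D.M *ᵥ y) := by
  conv_lhs => rw [← D.S_transpose]
  rw [← Matrix.vecMul_transpose, Matrix.transpose_transpose, ← Matrix.dotProduct_mulVec,
    Matrix.mulVec_mulVec]
  rw [D.S_transpose, D.S_mul_S]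

/-- the Euclidean model map. -/
noncomputable def Data.Phi (g : G) (x : EuclideanSpace ℝ (Fin m)) : EuclideanSpace ℝ (Fin m) :=
  (EuclideanSpace.equiv (Fin m) ℝ).symm (D.S *ᵥ (D.psi g (D.S⁻¹ *ᵥ (EuclideanSpace.equiv (Fin m) ℝ x))))

lemma Data.Phi_mul (g₁ g₂ : G) (x : EuclideanSpace ℝ (Fin m)) :
    D.Phi (g₁ * g₂) x = D.Phi g₁ (D.Phi g₂ x) := by
  unfold Data.Phi
  simp only [ContinuousLinearEquiv.apply_symm_apply]
  rw [D.S_mulVec_cancel, D.psi_mul]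

lemma Data.Phi_inv (g : G) (x : EuclideanSpace ℝ (Fin m)) :
    D.Phi g⁻¹ (D.Phi g x) = x := by
  unfold Data.Phi
  simp only [ContinuousLinearEquiv.apply_symm_apply]
  rw [D.S_mulVec_cancel, D.psi_inv, D.S_inv_mulVec_cancel]
  simp

lemma Data.Phi_dist (g : G) (x y : EuclideanSpace ℝ (Fin m)) :
    dist (D.Phi g x) (D.Phi g y) = dist x y := by
  rw [EuclideanSpace.dist_eq, EuclideanSpace.dist_eq]
  congr 1
  have coord : ∀ (w : Fin m → ℝ) (i : Fin m),
      ((EuclideanSpace.equiv (Fin m) ℝ).symm w : EuclideanSpace ℝ (Fin m)) i = w i :=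
    fun w i => rfl
  have hsq : ∀ a b : ℝ, dist a b ^ 2 = (a - b) ^ 2 := by
    intro a b
    rw [Real.dist_eq, sq_abs]
  calc ∑ i, dist (D.Phi g x i) (D.Phi g y i) ^ 2
      = ∑ i, ((D.Phi g x i) - (D.Phi g y i)) ^ 2 := by
        exact Finset.sum_congr rfl (fun i _ => hsq _ _)
    _ = ∑ i, dist (x i) (y i) ^ 2 := ?_
  have hdiff : ∀ i, D.Phi g x i - D.Phi g y i
      = (D.S *ᵥ (D.alpha g (D.S⁻¹ *ᵥ ((EuclideanSpace.equiv (Fin m) ℝ x) - (EuclideanSpace.equiv (Fin m) ℝ y))))) i := by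
    intro i
    unfold Data.Phi
    rw [coord, coord]
    rw [← Pi.sub_apply, ← Matrix.mulVec_sub, D.psi_sub, ← map_sub, ← Matrix.mulVec_sub]
    rw [map_sub]
  have dotsq : ∀ w : Fin m → ℝ, ∑ i, (w i) ^ 2 = w ⬝ᵥ w := by
    intro w
    unfold dotProduct
    exact Finset.sum_congr rfl (fun i _ => sq (w i))
  calc ∑ i, ((D.Phi g x i) - (D.Phi g y i)) ^ 2
      = ∑ i, ((D.S *ᵥ (D.alpha g (D.S⁻¹ *ᵥ ((EuclideanSpace.equiv (Fin m) ℝ x) - (EuclideanSpace.equiv (Fin m) ℝ y))))) i) ^ 2 := by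
        exact Finset.sum_congr rfl (fun i _ => by rw [hdiff i])
    _ = ∑ i, dist (x i) (y i) ^ 2 := ?_
  rw [dotsq, D.S_dot, D.quad_invariant, ← D.S_dot, D.S_inv_mulVec_cancel]
  have : ∀ i, dist (x i) (y i) ^ 2
      = (((EuclideanSpace.equiv (Fin m) ℝ x) - (EuclideanSpace.equiv (Fin m) ℝ y)) i) ^ 2 := by
    intro i
    rw [hsq]
    rfl
  rw [Finset.sum_congr rfl (fun i _ => this i), dotsq]

/-- the bundled isometry. -/
noncomputable def Data.PhiIso (g : G) :
    EuclideanSpace ℝ (Fin m) ≃ᵢ EuclideanSpace ℝ (Fin m) where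
  toFun := D.Phi g
  invFun := D.Phi g⁻¹
  left_inv := D.Phi_inv g
  right_inv := fun x => by
    have := D.Phi_inv g⁻¹ x
    rwa [inv_inv] at this
  isometry_toFun := Isometry.of_dist_eq (D.Phi_dist g)

lemma Data.PhiIso_apply (g : G) (x : EuclideanSpace ℝ (Fin m)) :
    D.PhiIso g x = D.Phi g x := rfl

/-- the bundled homomorphism. -/
noncomputable def Data.phiHom : G →* (EuclideanSpace ℝ (Fin m) ≃ᵢ EuclideanSpace ℝ (Fin m)) :=
  MonoidHom.mk' (fun g => D.PhiIso g) (by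
    intro a b
    apply IsometryEquiv.ext
    intro x
    exact D.Phi_mul a b x)

lemma Data.phiHom_apply (g : G) (x : EuclideanSpace ℝ (Fin m)) :
    D.phiHom g x = D.Phi g x := rfl

/-- freeness. -/
lemma Data.free (hG : ∀ g : G, g ≠ 1 → ¬IsOfFinOrder g) (g : G) (x : EuclideanSpace ℝ (Fin m))
    (hfix : D.phiHom g x = x) : g = 1 := by
  letI := D.fin
  -- translate fixed point into the `psi` world
  set u : Fin m → ℝ := D.S⁻¹ *ᵥ (EuclideanSpace.equiv (Fin m) ℝ x) with hu
  have hpsi : D.psi g u = u := by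
    have h1 : D.Phi g x = x := hfix
    unfold Data.Phi at h1
    have h2 := congrArg (fun z => D.S⁻¹ *ᵥ (EuclideanSpace.equiv (Fin m) ℝ z)) h1
    simp only [ContinuousLinearEquiv.apply_symm_apply] at h2
    rw [D.S_mulVec_cancel] at h2
    exact h2
  have hpow : ∀ k : ℕ, D.psi (g ^ k) u = u := by
    intro k
    induction k with
    | zero => simpa using D.psi_one u
    | succ k ih =>
      rw [pow_succ, D.psi_mul, hpsi, ih]
  set k := D.N.index with hk
  have hk0 : k ≠ 0 := D.fin.index_ne_zero
  have hmem : g ^ k ∈ D.N := by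
    letI := D.normal
    exact D.N.pow_index_mem g
  have hfixk := hpow k
  have : D.psi ((⟨g ^ k, hmem⟩ : D.N) : G) u = u := hfixk
  rw [D.psi_coe] at this
  have hiota : D.iota (⟨g ^ k, hmem⟩ : D.N) = 0 := by
    have := congrArg (fun w => w - u) this
    simpa using this
  have hn1 : (⟨g ^ k, hmem⟩ : D.N) = 1 := by
    apply D.iota_inj
    rw [hiota]
    funext i
    simp [Data.iota, D.j_one]
  have hgk : g ^ k = 1 := congrArg Subtype.val hn1
  by_contra hne
  exact hG g hne (isOfFinOrder_iff_pow_eq_one.mpr ⟨k, Nat.pos_of_ne_zero hk0, hgk⟩)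

lemma Data.injective (hG : ∀ g : G, g ≠ 1 → ¬IsOfFinOrder g) : Function.Injective D.phiHom := by
  rw [injective_iff_map_eq_one (f := D.phiHom)]
  intro g hg
  apply D.free hG g 0
  rw [hg]
  rfl

lemma Data.properlyDisc (K L : Set (EuclideanSpace ℝ (Fin m)))
    (hK : IsCompact K) (hL : IsCompact L) :
    {g : G | ((D.phiHom g) '' K ∩ L).Nonempty}.Finite := by
  letI := D.normal
  letI := D.qft
  classical
  set m₁ : EuclideanSpace ℝ (Fin m) → (Fin m → ℝ) :=
    fun x => D.S⁻¹ *ᵥ (EuclideanSpace.equiv (Fin m) ℝ x) with hm₁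
  have hcont : Continuous m₁ := by
    have h1 : Continuous fun w : Fin m → ℝ => D.S⁻¹ *ᵥ w :=
      (Matrix.mulVecLin D.S⁻¹).continuous_of_finiteDimensional
    exact h1.comp (EuclideanSpace.equiv (Fin m) ℝ).continuous_toFun
  have hK' : IsCompact (m₁ '' K) := hK.image hcont
  have hL' : IsCompact (m₁ '' L) := hL.image hcont
  have hU : IsCompact (⋃ q : G ⧸ D.N, D.psi q.out '' (m₁ '' K)) :=
    isCompact_iUnion (fun q => hK'.image (D.psi_continuous q.out))
  obtain ⟨R₁, hR₁⟩ := hU.isBounded.subset_closedBall 0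
  obtain ⟨R₂, hR₂⟩ := hL'.isBounded.subset_closedBall 0
  set C : ℝ := R₁ + R₂ with hC
  -- the candidate finite set of N-parts
  set T : Set D.N := {n : D.N | ‖D.iota n‖ ≤ C} with hT
  have hTfin : T.Finite := by
    have hV : {v : Fin m → ℤ | ∀ i, |v i| ≤ ⌈C⌉}.Finite := by
      apply Set.Finite.subset (Set.Finite.pi (fun i : Fin m => Set.finite_Icc (-⌈C⌉) ⌈C⌉))
      intro v hv
      rw [Set.mem_univ_pi]
      intro i
      exact Set.mem_Icc.mpr (abs_le.mp (hv i))
    apply Set.Finite.subset (Set.Finite.preimage (Function.Injective.injOn D.j_inj) hV)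
    intro n hn
    simp only [Set.mem_preimage, Set.mem_setOf_eq]
    intro i
    have h1 : |(D.j n i : ℝ)| ≤ ‖D.iota n‖ := by
      have := norm_le_pi_norm (D.iota n) i
      simpa [Data.iota] using this
    have h2 : |(D.j n i : ℝ)| ≤ (⌈C⌉ : ℝ) := le_trans h1 (le_trans hn (Int.le_ceil C))
    have h3 : |(D.j n i : ℝ)| = ((|D.j n i| : ℤ) : ℝ) := by push_cast; rfl
    rw [h3] at h2
    exact_mod_cast h2
  -- inject the set into `T × (G ⧸ N)`
  set F : G → D.N × (G ⧸ D.N) := fun g => (D.nPart g, (g : G ⧸ D.N)) with hF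
  have hFinj : Function.Injective F := by
    intro g g' hgg
    have h1 : D.nPart g = D.nPart g' := congrArg Prod.fst hgg
    have h2 : (g : G ⧸ D.N) = (g' : G ⧸ D.N) := congrArg Prod.snd hgg
    have h3 : D.rep g = D.rep g' := D.rep_congr h2
    rw [← D.nPart_mul_rep g, ← D.nPart_mul_rep g', h1, h3]
  apply Set.Finite.of_finite_image (f := F) ?_ (Function.Injective.injOn hFinj)
  apply Set.Finite.subset (Set.Finite.prod hTfin (Set.finite_univ))
  rintro ⟨n, q⟩ ⟨g, hg, hgF⟩
  obtain ⟨z, ⟨x, hxK, hxz⟩, hzL⟩ := hg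
  -- compute the `psi`-world picture
  set u : Fin m → ℝ := m₁ x with hux
  have huK : u ∈ m₁ '' K := ⟨x, hxK, rfl⟩
  have hpsiu : D.psi g u = m₁ z := by
    rw [← hxz]
    show D.psi g u = m₁ (D.phiHom g x)
    rw [D.phiHom_apply]
    unfold Data.Phi
    rw [hm₁]
    simp only [ContinuousLinearEquiv.apply_symm_apply]
    rw [D.S_mulVec_cancel]
  have hpsiuL : D.psi g u ∈ m₁ '' L := by
    rw [hpsiu]; exact ⟨z, hzL, rfl⟩
  have hnormL : ‖D.psi g u‖ ≤ R₂ := mem_closedBall_zero_iff.mp (hR₂ hpsiuL)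
  set w : Fin m → ℝ := D.psi (D.rep g) u with hw
  have hwU : w ∈ ⋃ q : G ⧸ D.N, D.psi q.out '' (m₁ '' K) := by
    have h1 : w ∈ D.psi ((g : G ⧸ D.N)).out '' (m₁ '' K) := ⟨u, huK, rfl⟩
    exact Set.mem_iUnion.mpr ⟨(g : G ⧸ D.N), h1⟩
  have hnormU : ‖w‖ ≤ R₁ := mem_closedBall_zero_iff.mp (hR₁ hwU)
  have hdecomp : D.psi g u = w + D.iota (D.nPart g) := by
    conv_lhs => rw [← D.nPart_mul_rep g]
    rw [D.psi_mul, D.psi_coe]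
  have hiota_eq : D.iota (D.nPart g) = D.psi g u - w := by
    rw [hdecomp]; abel
  have hmemT : D.nPart g ∈ T := by
    rw [hT, Set.mem_setOf_eq, hiota_eq]
    calc ‖D.psi g u - w‖ ≤ ‖D.psi g u‖ + ‖w‖ := norm_sub_le _ _
      _ ≤ R₂ + R₁ := add_le_add hnormL hnormU
      _ = C := by rw [hC]; ring
  constructor
  · rw [← hgF]
    exact hmemT
  · exact Set.mem_univ _

lemma Data.cocompact :
    ∃ C : Set (EuclideanSpace ℝ (Fin m)), IsCompact C ∧
      ⋃ g : G, (D.phiHom g) '' C = Set.univ := by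
  classical
  set K₀ : Set (Fin m → ℝ) := Set.pi Set.univ (fun _ => Set.Icc (0:ℝ) D.d) with hK₀
  have hK₀c : IsCompact K₀ := isCompact_univ_pi (fun _ => isCompact_Icc)
  set em := EuclideanSpace.equiv (Fin m) ℝ with hem
  set C : Set (EuclideanSpace ℝ (Fin m)) := (fun w => em.symm (D.S *ᵥ w)) '' K₀ with hCdef
  have hCc : IsCompact C := by
    apply hK₀c.image
    have h1 : Continuous fun w : Fin m → ℝ => D.S *ᵥ w :=
      (Matrix.mulVecLin D.S).continuous_of_finiteDimensional
    exact em.symm.continuous_toFun.comp h1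
  refine ⟨C, hCc, ?_⟩
  rw [Set.eq_univ_iff_forall]
  intro x
  rw [Set.mem_iUnion]
  set u : Fin m → ℝ := D.S⁻¹ *ᵥ (em x) with hu
  set w : Fin m → ℤ := fun i => ⌊u i / D.d⌋ with hwdef
  obtain ⟨n, hjn⟩ := D.sur w
  have hiota_n : D.iota n = fun i => (D.d : ℝ) * w i := by
    funext i
    show (D.j n i : ℝ) = (D.d : ℝ) * w i
    rw [hjn]
    push_cast
    simp
  set y : Fin m → ℝ := u - D.iota n with hy
  have hyK₀ : y ∈ K₀ := by
    rw [hK₀, Set.mem_univ_pi]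
    intro i
    have hcoord : y i = (D.d : ℝ) * Int.fract (u i / D.d) := by
      have hfr : (D.d:ℝ) * Int.fract (u i / D.d) = u i - D.d * ⌊u i / D.d⌋ := by
        rw [Int.fract, mul_sub, mul_div_cancel₀ _ D.d_ne]
      rw [hy]
      show u i - D.iota n i = (D.d:ℝ) * Int.fract (u i / D.d)
      rw [hiota_n, hfr]
    constructor
    · rw [hcoord]
      exact mul_nonneg (Nat.cast_nonneg _) (Int.fract_nonneg _)
    · rw [hcoord]
      calc (D.d:ℝ) * Int.fract (u i / D.d) ≤ (D.d:ℝ) * 1 := by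
            apply mul_le_mul_of_nonneg_left (Int.fract_lt_one _).le (by positivity)
        _ = D.d := mul_one _
  refine ⟨(n : G), em.symm (D.S *ᵥ y), ⟨y, hyK₀, rfl⟩, ?_⟩
  rw [D.phiHom_apply]
  unfold Data.Phi
  rw [← hem]
  simp only [ContinuousLinearEquiv.apply_symm_apply]
  rw [D.S_mulVec_cancel, D.psi_coe]
  have h2 : y + D.iota n = u := by rw [hy]; abel
  rw [h2, hu, D.S_inv_mulVec_cancel]
  simp

/-- build the data from a finite-index subgroup isomorphic to `ℤ^m`. -/
noncomputable def mkData {G : Type*} [Group G] {m : ℕ} (H : Subgroup G)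
    (hHfin : H.FiniteIndex) (e : H ≃* Multiplicative (Fin m → ℤ)) : Data G m := by
  haveI := hHfin
  refine
  { N := H.normalCore
    normal := H.normalCore_normal
    fin := H.finiteIndex_normalCore
    j := fun n => (e ⟨n.1, Subgroup.normalCore_le H n.2⟩).toAdd
    j_mul := ?_
    j_inj := ?_
    d := H.normalCore.index
    d_pos := ?_
    sur := ?_ }
  · intro a b
    show (e (⟨a.1, Subgroup.normalCore_le H a.2⟩ * ⟨b.1, Subgroup.normalCore_le H b.2⟩)).toAdd = _
    rw [_root_.map_mul]
    rfl
  · intro a b hab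
    apply Subtype.ext
    have h1 : (⟨a.1, Subgroup.normalCore_le H a.2⟩ : H) = ⟨b.1, Subgroup.normalCore_le H b.2⟩ := by
      apply e.injective
      exact Multiplicative.toAdd.injective hab
    have h2 := congrArg Subtype.val h1
    exact h2
  · haveI : H.normalCore.FiniteIndex := H.finiteIndex_normalCore
    exact Nat.pos_of_ne_zero Subgroup.FiniteIndex.index_ne_zero
  · intro v
    haveI : H.normalCore.FiniteIndex := H.finiteIndex_normalCore
    set hh : H := e.symm (Multiplicative.ofAdd v) with hhh
    set g : G := (hh : G) with hgdef
    have hmem : g ^ H.normalCore.index ∈ H.normalCore := by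
      haveI := H.normalCore_normal
      exact H.normalCore.pow_index_mem g
    refine ⟨⟨g ^ H.normalCore.index, hmem⟩, ?_⟩
    have h1 : (⟨g ^ H.normalCore.index, Subgroup.normalCore_le H hmem⟩ : H)
        = hh ^ H.normalCore.index := by
      apply Subtype.ext
      simp [hgdef]
    show (e ⟨g ^ H.normalCore.index, Subgroup.normalCore_le H hmem⟩).toAdd = _
    rw [h1, _root_.map_pow, hhh, MulEquiv.apply_symm_apply, toAdd_pow, toAdd_ofAdd]

end CrysAux

/-- A torsion-free group with a finite-index subgroup isomorphic to `ℤ^m` admits a free,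
properly discontinuous, cocompact action by isometries on Euclidean `m`-space, given by
an injective homomorphism into the isometry group. -/
theorem exists_free_euclidean_action_of_torsionFree_virtually_zm (G : Type*) [Group G]
    (hG : ∀ g : G, g ≠ 1 → ¬IsOfFinOrder g) (m : ℕ)
    (h : ∃ H : Subgroup G, H.FiniteIndex ∧ Nonempty (H ≃* Multiplicative (Fin m → ℤ))) :
    ∃ φ : G →* (EuclideanSpace ℝ (Fin m) ≃ᵢ EuclideanSpace ℝ (Fin m)),
      Function.Injective φ ∧
      (∀ (g : G) (x : EuclideanSpace ℝ (Fin m)), (φ g) x = x → g = 1) ∧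
      (∀ K L : Set (EuclideanSpace ℝ (Fin m)), IsCompact K → IsCompact L →
        {g : G | ((φ g) '' K ∩ L).Nonempty}.Finite) ∧
      (∃ C : Set (EuclideanSpace ℝ (Fin m)), IsCompact C ∧
        ⋃ g : G, (φ g) '' C = Set.univ) := by
  obtain ⟨H, hHfin, ⟨e⟩⟩ := h
  set D := CrysAux.mkData H hHfin e with hD
  exact ⟨D.phiHom, D.injective hG, D.free hG, D.properlyDisc, D.cocompact⟩
end

section
/- Let Γ be a group having a subgroup of index at most 2 that is isomorphic to the infinite cyclic group ℤ. Then Γ is isomorphic to one of: ℤ, ℤ × ℤ/2ℤ, or the infinite dihedral group ℤ/2 ∗ ℤ/2. -/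
section Aux

variable {Γ : Type*} [Group Γ]

/-- identity coercion `ZMod 0 → ℤ` -/
def zmodZeroToInt : ZMod 0 → ℤ := fun i => i

lemma zmodZeroToInt_add (i j : ZMod 0) :
    zmodZeroToInt (i + j) = zmodZeroToInt i + zmodZeroToInt j := rfl

lemma zmodZeroToInt_sub (i j : ZMod 0) :
    zmodZeroToInt (i - j) = zmodZeroToInt i - zmodZeroToInt j := rfl

lemma zmodZeroToInt_zero : zmodZeroToInt 0 = 0 := rfl

lemma zmodZeroToInt_inj {i j : ZMod 0} (h : zmodZeroToInt i = zmodZeroToInt j) : i = j := h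

end Aux

/-- A group with a subgroup of index at most 2 isomorphic to `ℤ` is isomorphic to `ℤ`,
to `ℤ × ℤ/2ℤ`, or to the infinite dihedral group. -/
theorem classification_virtually_Z_index_two (Γ : Type*) [Group Γ]
    (h : ∃ H : Subgroup Γ, (H.index = 1 ∨ H.index = 2) ∧
      Nonempty (H ≃* Multiplicative ℤ)) :
    Nonempty (Γ ≃* Multiplicative ℤ) ∨
    Nonempty (Γ ≃* Multiplicative ℤ × Multiplicative (ZMod 2)) ∨
    Nonempty (Γ ≃* DihedralGroup 0) := by
  obtain ⟨H, hidx, ⟨e⟩⟩ := h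
  rcases hidx with h1 | h2
  · -- index 1 : `H = ⊤`
    left
    have hH : H = ⊤ := Subgroup.index_eq_one.mp h1
    subst hH
    exact ⟨Subgroup.topEquiv.symm.trans e⟩
  -- index 2
  set xH : H := e.symm (Multiplicative.ofAdd 1) with hxH
  set x : Γ := (xH : Γ) with hxdef
  have hxmem : x ∈ H := xH.2
  have hxpow : ∀ n : ℤ, x ^ n ∈ H := fun n => zpow_mem hxmem n
  -- every element of `H` is a power of `x`
  have hgen : ∀ g ∈ H, ∃ n : ℤ, g = x ^ n := by
    intro g hg
    set n : ℤ := (e ⟨g, hg⟩).toAdd with hn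
    refine ⟨n, ?_⟩
    have key : (⟨g, hg⟩ : H) = xH ^ n := by
      apply e.injective
      rw [map_zpow]
      have hx1 : e xH = Multiplicative.ofAdd 1 := e.apply_symm_apply _
      rw [hx1]
      apply Multiplicative.toAdd.injective
      simp only [toAdd_zpow, toAdd_ofAdd, smul_eq_mul, mul_one]
      exact hn.symm
    have hcoe := congrArg (Subtype.val) key
    rw [SubgroupClass.coe_zpow] at hcoe
    exact hcoe
  -- powers of `x` are injective
  have hinjpow : ∀ n : ℤ, x ^ n = 1 → n = 0 := by
    intro n hn
    have h1 : xH ^ n = 1 := by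
      apply Subtype.ext
      push_cast
      exact hn
    have h2 := congrArg e h1
    rw [map_zpow, map_one] at h2
    have hx1 : e xH = Multiplicative.ofAdd 1 := e.apply_symm_apply _
    rw [hx1] at h2
    have := congrArg Multiplicative.toAdd h2
    simpa using this
  have hxeq : ∀ m n : ℤ, x ^ m = x ^ n → m = n := by
    intro m n hmn
    have : x ^ (m - n) = 1 := by
      rw [zpow_sub, hmn, mul_inv_cancel]
    have := hinjpow _ this
    omega
  -- pick `t ∉ H`
  have hne : ∃ t : Γ, t ∉ H := by
    by_contra hc
    push_neg at hc
    have : H = ⊤ := (Subgroup.eq_top_iff' H).mpr hc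
    rw [this, Subgroup.index_top] at h2
    omega
  obtain ⟨t, ht⟩ := hne
  have memiff : ∀ {a b : Γ}, a * b ∈ H ↔ (a ∈ H ↔ b ∈ H) :=
    fun {a b} => Subgroup.mul_mem_iff_of_index_two h2
  have htinv : t⁻¹ ∉ H := fun hc => ht ((inv_mem_iff).mp hc)
  -- elements not in `H` are of the form `t * x ^ n`
  have hother : ∀ γ : Γ, γ ∉ H → ∃ n : ℤ, γ = t * x ^ n := by
    intro γ hγ
    have hmem : t⁻¹ * γ ∈ H := memiff.mpr (by simp [htinv, hγ])
    obtain ⟨n, hn⟩ := hgen _ hmem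
    exact ⟨n, by rw [← hn]; group⟩
  -- conjugation of `x` by `t`
  have hconj_mem : t * x * t⁻¹ ∈ H := by
    have h1 : t * x ∉ H := by
      intro hc
      exact ht (by simpa [hxmem] using memiff.mp hc)
    exact memiff.mpr (by simp [h1, htinv])
  obtain ⟨k, hk⟩ := hgen _ hconj_mem
  have hconj_mem' : t⁻¹ * x * t ∈ H := by
    have h1 : t⁻¹ * x ∉ H := by
      intro hc
      exact htinv (by simpa [hxmem] using memiff.mp hc)
    have h2' : t⁻¹ * x * t ∈ H := memiff.mpr (by simp [h1, ht])
    exact h2'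
  obtain ⟨k', hk'⟩ := hgen _ hconj_mem'
  have hconjn : ∀ n : ℤ, t * x ^ n * t⁻¹ = x ^ (k * n) := by
    intro n
    calc t * x ^ n * t⁻¹ = (t * x * t⁻¹) ^ n := by rw [conj_zpow]
      _ = (x ^ k) ^ n := by rw [hk]
      _ = x ^ (k * n) := by rw [← zpow_mul]
  have hconjn' : ∀ n : ℤ, t⁻¹ * x ^ n * t = x ^ (k' * n) := by
    intro n
    calc t⁻¹ * x ^ n * t = (t⁻¹ * x * t⁻¹⁻¹) ^ n := by rw [conj_zpow, inv_inv]
      _ = (x ^ k') ^ n := by rw [inv_inv, hk']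
      _ = x ^ (k' * n) := by rw [← zpow_mul]
  have hkk' : k' * k = 1 := by
    have h1 : t⁻¹ * (t * x * t⁻¹) * t = x := by group
    have h2' : t⁻¹ * (t * x * t⁻¹) * t = x ^ (k' * k) := by
      rw [hk]
      have := hconjn' k
      rw [← this]
    have : x ^ (k' * k) = x ^ (1 : ℤ) := by rw [← h2', h1, zpow_one]
    exact hxeq _ _ this
  have hksq : k = 1 ∨ k = -1 := by
    have : IsUnit k := IsUnit.of_mul_eq_one (a := k) k' (by linarith [hkk', mul_comm k k'])
    exact Int.isUnit_iff.mp this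
  -- `t * t ∈ H`
  obtain ⟨n₀, hn₀⟩ := hgen _ (Subgroup.mul_self_mem_of_index_two h2 t)
  rcases hksq with hk1 | hkm1
  · -- commuting case : `t * x = x * t`
    subst hk1
    have hcomm : ∀ n : ℤ, t * x ^ n = x ^ n * t := by
      intro n
      have := hconjn n
      rw [one_mul] at this
      calc t * x ^ n = t * x ^ n * t⁻¹ * t := by group
        _ = x ^ n * t := by rw [this]
    rcases Int.even_or_odd n₀ with ⟨m, hm⟩ | ⟨m, hm⟩
    · -- `t * t = x ^ (2 m)` : `Γ ≃ ℤ × ℤ/2`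
      right; left
      set s : Γ := t * x ^ (-m) with hs
      have hsnot : s ∉ H := by
        intro hc
        have : t ∈ H := by
          have : s * x ^ m ∈ H := H.mul_mem hc (hxpow m)
          simpa [hs, mul_assoc, ← zpow_add] using this
        exact ht this
      have hss : s * s = 1 := by
        have : s * s = t * t * (x ^ (-m) * x ^ (-m)) := by
          rw [hs]
          rw [show t * x ^ (-m) * (t * x ^ (-m)) = t * (x ^ (-m) * t) * x ^ (-m) by group]
          rw [show x ^ (-m) * t = t * x ^ (-m) from (hcomm (-m)).symm]
          group
        rw [this, hn₀, ← zpow_add, ← zpow_add, hm]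
        group
      have hscomm : ∀ n : ℤ, s * x ^ n = x ^ n * s := by
        intro n
        rw [hs]
        calc t * x ^ (-m) * x ^ n = t * x ^ (-m + n) := by rw [mul_assoc, ← zpow_add]
          _ = x ^ (-m + n) * t := by rw [hcomm]
          _ = x ^ (n + -m) * t := by rw [add_comm]
          _ = x ^ n * x ^ (-m) * t := by rw [zpow_add]
          _ = x ^ n * (t * x ^ (-m)) := by rw [mul_assoc, ← hcomm]
      have hZ2 : ∀ b : ZMod 2, b = 0 ∨ b = 1 := by decide
      have hval : ∀ a b : ZMod 2, s ^ (a + b).val = s ^ a.val * s ^ b.val := by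
        intro a b
        rcases hZ2 a with rfl | rfl <;> rcases hZ2 b with rfl | rfl <;>
          simp only [show ((0 : ZMod 2) + 0).val = 0 from by decide,
            show ((0 : ZMod 2) + 1).val = 1 from by decide,
            show ((1 : ZMod 2) + 0).val = 1 from by decide,
            show ((1 : ZMod 2) + 1).val = 0 from by decide,
            show (0 : ZMod 2).val = 0 from by decide,
            show (1 : ZMod 2).val = 1 from by decide,
            pow_zero, pow_one, one_mul, mul_one]
        exact hss.symm
      -- the homomorphism
      have hspow_comm : ∀ (v : ℕ) (b : ℤ), x ^ b * s ^ v = s ^ v * x ^ b := by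
        intro v b
        induction v with
        | zero => simp
        | succ w ih =>
          rw [pow_succ, ← mul_assoc, ih, mul_assoc, ← hscomm, ← mul_assoc, ← pow_succ]
      let g : Multiplicative ℤ × Multiplicative (ZMod 2) →* Γ :=
        { toFun := fun p => x ^ p.1.toAdd * s ^ (p.2.toAdd).val
          map_one' := by
            simp [show ((1 : Multiplicative (ZMod 2)).toAdd).val = 0 from by decide]
          map_mul' := by
            rintro ⟨a₁, a₂⟩ ⟨b₁, b₂⟩
            simp only [Prod.fst_mul, Prod.snd_mul, toAdd_mul]
            rw [hval, zpow_add]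
            rw [show x ^ a₁.toAdd * x ^ b₁.toAdd * (s ^ a₂.toAdd.val * s ^ b₂.toAdd.val)
              = x ^ a₁.toAdd * (x ^ b₁.toAdd * s ^ a₂.toAdd.val) * s ^ b₂.toAdd.val by group]
            rw [hspow_comm]
            group }
      have hg_apply : ∀ p, g p = x ^ p.1.toAdd * s ^ (p.2.toAdd).val := fun _ => rfl
      have hg_inj : Function.Injective g := by
        rintro ⟨a₁, a₂⟩ ⟨b₁, b₂⟩ hab
        rw [hg_apply, hg_apply] at hab
        dsimp only at hab
        have ha2 := hZ2 a₂.toAdd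
        have hb2 := hZ2 b₂.toAdd
        have h22 : a₂ = b₂ → a₂.toAdd.val = b₂.toAdd.val := fun hh => by rw [hh]
        have heqcase : a₂ = b₂ := by
          by_contra hne2
          -- then `s ∈ H`, contradiction
          have hvals : (a₂.toAdd.val = 0 ∧ b₂.toAdd.val = 1) ∨
              (a₂.toAdd.val = 1 ∧ b₂.toAdd.val = 0) := by
            rcases ha2 with h0 | h1 <;> rcases hb2 with h0' | h1'
            · exact absurd (Multiplicative.toAdd.injective (h0.trans h0'.symm)) hne2
            · left; exact ⟨by rw [h0]; decide, by rw [h1']; decide⟩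
            · right; exact ⟨by rw [h1]; decide, by rw [h0']; decide⟩
            · exact absurd (Multiplicative.toAdd.injective (h1.trans h1'.symm)) hne2
          have hsH : s ∈ H := by
            rcases hvals with ⟨hv1, hv2⟩ | ⟨hv1, hv2⟩
            · -- x^a = x^b * s → s = x^(-b) * x^a
              rw [hv1, hv2, pow_zero, pow_one, mul_one] at hab
              have hseq : s = x ^ (-b₁.toAdd) * x ^ a₁.toAdd := by
                calc s = x ^ (-b₁.toAdd) * (x ^ b₁.toAdd * s) := by group
                  _ = x ^ (-b₁.toAdd) * x ^ a₁.toAdd := by rw [← hab]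
              rw [hseq]
              exact H.mul_mem (hxpow _) (hxpow _)
            · rw [hv1, hv2, pow_zero, pow_one, mul_one] at hab
              have hseq : s = x ^ (-a₁.toAdd) * x ^ b₁.toAdd := by
                calc s = x ^ (-a₁.toAdd) * (x ^ a₁.toAdd * s) := by group
                  _ = x ^ (-a₁.toAdd) * x ^ b₁.toAdd := by rw [hab]
              rw [hseq]
              exact H.mul_mem (hxpow _) (hxpow _)
          exact hsnot hsH
        have h1eq : a₁ = b₁ := by
          rw [h22 heqcase] at hab
          have := mul_right_cancel hab
          exact Multiplicative.toAdd.injective (hxeq _ _ this)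
        exact Prod.ext h1eq heqcase
      have hg_surj : Function.Surjective g := by
        intro γ
        by_cases hγ : γ ∈ H
        · obtain ⟨n, hn⟩ := hgen _ hγ
          refine ⟨(Multiplicative.ofAdd n, 1), ?_⟩
          rw [hg_apply]
          simp [show ((1 : Multiplicative (ZMod 2)).toAdd).val = 0 from by decide, hn]
        · obtain ⟨n, hn⟩ := hother _ hγ
          refine ⟨(Multiplicative.ofAdd (m + n), Multiplicative.ofAdd 1), ?_⟩
          rw [hg_apply]
          simp only [toAdd_ofAdd, show ((1 : ZMod 2)).val = 1 from by decide, pow_one]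
          rw [hn, hs, zpow_add]
          rw [show x ^ m * x ^ n * (t * x ^ (-m)) = x ^ m * (x ^ n * t) * x ^ (-m) by group]
          rw [← hcomm n]
          rw [show x ^ m * (t * x ^ n) * x ^ (-m) = x ^ m * t * (x ^ n * x ^ (-m)) by group]
          rw [← hcomm m]
          group
      exact ⟨(MulEquiv.ofBijective g ⟨hg_inj, hg_surj⟩).symm⟩
    · -- `t * t = x ^ (2 m + 1)` : `Γ ≃ ℤ`
      left
      set u : Γ := t * x ^ (-m) with hu
      have hunot : u ∉ H := by
        intro hc
        have : t ∈ H := by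
          have : u * x ^ m ∈ H := H.mul_mem hc (hxpow m)
          simpa [hu, mul_assoc, ← zpow_add] using this
        exact ht this
      have hucomm : ∀ n : ℤ, u * x ^ n = x ^ n * u := by
        intro n
        rw [hu]
        calc t * x ^ (-m) * x ^ n = t * x ^ (-m + n) := by rw [mul_assoc, ← zpow_add]
          _ = x ^ (-m + n) * t := by rw [hcomm]
          _ = x ^ (n + -m) * t := by rw [add_comm]
          _ = x ^ n * x ^ (-m) * t := by rw [zpow_add]
          _ = x ^ n * (t * x ^ (-m)) := by rw [mul_assoc, ← hcomm]
      have huu : u * u = x := by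
        have : u * u = t * t * (x ^ (-m) * x ^ (-m)) := by
          rw [hu]
          rw [show t * x ^ (-m) * (t * x ^ (-m)) = t * (x ^ (-m) * t) * x ^ (-m) by group]
          rw [show x ^ (-m) * t = t * x ^ (-m) from (hcomm (-m)).symm]
          group
        rw [this, hn₀, ← zpow_add, ← zpow_add, hm]
        group
      have hupow : ∀ d : ℤ, u ^ (2 * d) = x ^ d := by
        intro d
        have h1 : (u * u) ^ d = u ^ d * u ^ d := (Commute.refl u).mul_zpow d
        rw [show (2 : ℤ) * d = d + d from by ring, zpow_add, ← h1, huu]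
      have hupow' : ∀ d : ℤ, u ^ (2 * d + 1) = x ^ d * u := by
        intro d
        rw [zpow_add, hupow, zpow_one]
      let g : Multiplicative ℤ →* Γ := zpowersHom Γ u
      have hg_inj : Function.Injective g := by
        intro a b hab
        have hab' : u ^ a.toAdd = u ^ b.toAdd := hab
        have : u ^ (a.toAdd - b.toAdd) = 1 := by
          rw [zpow_sub, hab', mul_inv_cancel]
        have hz : a.toAdd - b.toAdd = 0 := by
          set c : ℤ := a.toAdd - b.toAdd with hc
          rcases Int.even_or_odd c with ⟨d, hd⟩ | ⟨d, hd⟩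
          · rw [hd, show d + d = 2 * d by ring, hupow] at this
            have := hinjpow _ this
            omega
          · rw [hd, hupow'] at this
            exfalso
            apply hunot
            have hud : u = x ^ (-d) := by
              calc u = (x ^ d)⁻¹ * (x ^ d * u) := by group
                _ = (x ^ d)⁻¹ * 1 := by rw [this]
                _ = x ^ (-d) := by rw [mul_one, zpow_neg]
            rw [hud]
            exact hxpow _
        exact Multiplicative.toAdd.injective (by omega)
      have hg_surj : Function.Surjective g := by
        intro γ
        by_cases hγ : γ ∈ H
        · obtain ⟨n, hn⟩ := hgen _ hγ
          refine ⟨Multiplicative.ofAdd (2 * n), ?_⟩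
          have hgv : g (Multiplicative.ofAdd (2 * n)) = u ^ (2 * n) := rfl
          rw [hgv, hupow, ← hn]
        · obtain ⟨n, hn⟩ := hother _ hγ
          refine ⟨Multiplicative.ofAdd (2 * (m + n) + 1), ?_⟩
          have : g (Multiplicative.ofAdd (2 * (m + n) + 1)) = u ^ (2 * (m + n) + 1) := rfl
          rw [this, hupow', hn]
          rw [zpow_add, hu]
          rw [show x ^ m * x ^ n * (t * x ^ (-m)) = x ^ m * (x ^ n * t) * x ^ (-m) by group]
          rw [← hcomm n]
          rw [show x ^ m * (t * x ^ n) * x ^ (-m) = x ^ m * t * (x ^ n * x ^ (-m)) by group]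
          rw [← hcomm m]
          group
      exact ⟨(MulEquiv.ofBijective g ⟨hg_inj, hg_surj⟩).symm⟩
  · -- dihedral case : `t * x * t⁻¹ = x⁻¹`
    right; right
    subst hkm1
    have hconjneg : ∀ n : ℤ, t * x ^ n * t⁻¹ = x ^ (-n) := by
      intro n
      have := hconjn n
      rwa [neg_one_mul] at this
    have hswap : ∀ n : ℤ, x ^ n * t = t * x ^ (-n) := by
      intro n
      calc x ^ n * t = t * (t⁻¹ * x ^ n * t) := by group
        _ = t * x ^ (-n) := by
          congr 1
          have h1 : t * x ^ (-n) * t⁻¹ = x ^ n := by rw [hconjneg, neg_neg]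
          calc t⁻¹ * x ^ n * t = t⁻¹ * (t * x ^ (-n) * t⁻¹) * t := by rw [h1]
            _ = x ^ (-n) := by group
    -- `t * t = 1`
    have htt : t * t = 1 := by
      have h1 : t * (t * t) * t⁻¹ = t * t := by group
      have h2' : t * x ^ n₀ * t⁻¹ = x ^ (-n₀) := hconjneg n₀
      rw [← hn₀] at h2'
      rw [h1, hn₀] at h2'
      have := hxeq _ _ h2'
      have hn0 : n₀ = 0 := by omega
      rw [hn₀, hn0, zpow_zero]
    -- build the hom from the dihedral group
    let f : DihedralGroup 0 →* Γ :=
      { toFun := fun g => match g with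
          | .r i => x ^ zmodZeroToInt i
          | .sr i => t * x ^ zmodZeroToInt i
        map_one' := by
          rw [DihedralGroup.one_def]
          show x ^ zmodZeroToInt 0 = 1
          rw [zmodZeroToInt_zero, zpow_zero]
        map_mul' := by
          rintro (i | i) (j | j)
          · show x ^ zmodZeroToInt (i + j) = x ^ zmodZeroToInt i * x ^ zmodZeroToInt j
            rw [zmodZeroToInt_add, zpow_add]
          · show t * x ^ zmodZeroToInt (j - i)
              = x ^ zmodZeroToInt i * (t * x ^ zmodZeroToInt j)
            rw [← mul_assoc, hswap, zmodZeroToInt_sub, sub_eq_add_neg, add_comm,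
              zpow_add, mul_assoc]
          · show t * x ^ zmodZeroToInt (i + j)
              = t * x ^ zmodZeroToInt i * x ^ zmodZeroToInt j
            rw [zmodZeroToInt_add, zpow_add, mul_assoc]
          · show x ^ zmodZeroToInt (j - i)
              = t * x ^ zmodZeroToInt i * (t * x ^ zmodZeroToInt j)
            rw [show t * x ^ zmodZeroToInt i * (t * x ^ zmodZeroToInt j)
              = t * (x ^ zmodZeroToInt i * t) * x ^ zmodZeroToInt j by group]
            rw [hswap, show t * (t * x ^ (-zmodZeroToInt i)) * x ^ zmodZeroToInt j
              = (t * t) * (x ^ (-zmodZeroToInt i) * x ^ zmodZeroToInt j) by group]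
            rw [htt, one_mul, ← zpow_add, zmodZeroToInt_sub]
            ring_nf }
    have hf_r : ∀ i : ZMod 0, f (.r i) = x ^ zmodZeroToInt i := fun _ => rfl
    have hf_sr : ∀ i : ZMod 0, f (.sr i) = t * x ^ zmodZeroToInt i := fun _ => rfl
    have hf_inj : Function.Injective f := by
      rintro (i | i) (j | j) hij
      · rw [hf_r, hf_r] at hij
        exact congrArg DihedralGroup.r (zmodZeroToInt_inj (hxeq _ _ hij))
      · rw [hf_r, hf_sr] at hij
        exfalso
        apply ht
        have : t = x ^ zmodZeroToInt i * x ^ (-zmodZeroToInt j) := by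
          rw [hij]; group
        rw [this]
        exact H.mul_mem (hxpow _) (hxpow _)
      · rw [hf_sr, hf_r] at hij
        exfalso
        apply ht
        have : t = x ^ zmodZeroToInt j * x ^ (-zmodZeroToInt i) := by
          rw [← hij]; group
        rw [this]
        exact H.mul_mem (hxpow _) (hxpow _)
      · rw [hf_sr, hf_sr] at hij
        have := mul_left_cancel hij
        exact congrArg DihedralGroup.sr (zmodZeroToInt_inj (hxeq _ _ this))
    have hf_surj : Function.Surjective f := by
      intro γ
      by_cases hγ : γ ∈ H
      · obtain ⟨n, hn⟩ := hgen _ hγ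
        exact ⟨.r n, by show x ^ zmodZeroToInt n = γ; exact hn.symm⟩
      · obtain ⟨n, hn⟩ := hother _ hγ
        exact ⟨.sr n, by show t * x ^ zmodZeroToInt n = γ; exact hn.symm⟩
    exact ⟨(MulEquiv.ofBijective f ⟨hf_inj, hf_surj⟩).symm⟩
end

section
/- Let C ⊆ D ⊆ E be sets of natural numbers. If C is recursive in D and D is recursive in E, then C is recursive in E. -/
/-- Two disjoint sets of naturals are recursively separable if recursively enumerable
sets separate them. -/
def RecursivelySeparable (X Y : Set ℕ) : Prop :=
  ∃ X' Y' : Set ℕ, REPred (· ∈ X') ∧ REPred (· ∈ Y') ∧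
    X ⊆ X' ∧ Y ∩ X' = ∅ ∧ Y ⊆ Y' ∧ X ∩ Y' = ∅

/-- `C` is recursive in `D` if `C` and `D \ C` are recursively separable. -/
def RecursiveIn' (C D : Set ℕ) : Prop := RecursivelySeparable C (D \ C)

theorem REPred.and' {p q : ℕ → Prop} (hp : REPred p) (hq : REPred q) :
    REPred fun a => p a ∧ q a := by
  have h : Partrec fun a => (Part.assert (p a) fun _ => Part.some ()).bind
      fun _ => Part.assert (q a) fun _ => Part.some () :=
    hp.bind (hq.comp Computable.fst).to₂
  refine h.dom_re.of_eq fun a => ?_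
  simp [Part.assert]

theorem REPred.or' {p q : ℕ → Prop} (hp : REPred p) (hq : REPred q) :
    REPred fun a => p a ∨ q a := by
  obtain ⟨k, hk, H⟩ := Partrec.merge' hp hq
  refine hk.dom_re.of_eq fun a => ?_
  rw [(H a).2]
  simp [Part.assert]

/-- If `C ⊆ D ⊆ E`, `C` is recursive in `D`, and `D` is recursive in `E`, then `C` is
recursive in `E`. -/
theorem recursiveIn_trans (C D E : Set ℕ) (hCD : C ⊆ D) (hDE : D ⊆ E)
    (h1 : RecursiveIn' C D) (h2 : RecursiveIn' D E) : RecursiveIn' C E := by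
  obtain ⟨C', C'', hC', hC'', hCC', hDC', hDC'', hCC''⟩ := h1
  obtain ⟨D', D'', hD', hD'', hDD', hED', hED'', hDD''⟩ := h2
  refine ⟨C' ∩ D', C'' ∪ D'', ?_, ?_, ?_, ?_, ?_, ?_⟩
  · exact (hC'.and' hD').of_eq fun a => by simp [Set.mem_inter_iff]
  · exact (hC''.or' hD'').of_eq fun a => by simp [Set.mem_union]
  · exact fun x hx => ⟨hCC' hx, hDD' (hCD hx)⟩
  · ext x
    simp only [Set.mem_inter_iff, Set.mem_diff, Set.mem_empty_iff_false, iff_false]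
    rintro ⟨⟨hxE, hxC⟩, hxC', hxD'⟩
    by_cases hxD : x ∈ D
    · exact Set.eq_empty_iff_forall_notMem.mp hDC' x ⟨⟨hxD, hxC⟩, hxC'⟩
    · exact Set.eq_empty_iff_forall_notMem.mp hED' x ⟨⟨hxE, hxD⟩, hxD'⟩
  · rintro x ⟨hxE, hxC⟩
    by_cases hxD : x ∈ D
    · exact Or.inl (hDC'' ⟨hxD, hxC⟩)
    · exact Or.inr (hED'' ⟨hxE, hxD⟩)
  · ext x
    simp only [Set.mem_inter_iff, Set.mem_union, Set.mem_empty_iff_false, iff_false]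
    rintro ⟨hxC, hxC'' | hxD''⟩
    · exact Set.eq_empty_iff_forall_notMem.mp hCC'' x ⟨hxC, hxC''⟩
    · exact Set.eq_empty_iff_forall_notMem.mp hDD'' x ⟨hCD hxC, hxD''⟩
end
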